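/- For s > 0, an integer k, and 0 < α < 1, define the Laplace coefficient b_s^{(k)}(α) := (1/π) ∫₀^{2π} cos(kθ) (1 − 2α cos θ + α²)^{−s} dθ, and define Ā(α) := (3/4) α b_{3/2}^{(1)}(α) − (1/2) α b_{3/2}^{(3)}(α) − α² b_{3/2}^{(2)}(α) and B̄(α) := (3/4) α b_{1/2}^{(1)}(α) + (3/2) α b_{3/2}^{(0)}(α) − α² b_{3/2}^{(1)}(α) − (1/2) α b_{3/2}^{(2)}(α). Then at α = 2^{−2/3} (i.e., α = 1/∛4, the semi major axis ratio of a 2:1 mean-motion resonant pair), both Ā(α) > 0 and B̄(α) > 0. -/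

import Mathlib

open Real

set_option maxHeartbeats 1000000

/-- The Laplace coefficient
`b_s^(k)(α) = (1/π) ∫₀^{2π} cos(kθ) (1 − 2α cos θ + α²)^{−s} dθ`. -/
noncomputable def laplaceCoeff (s : ℝ) (k : ℤ) (α : ℝ) : ℝ :=
  (1 / π) * ∫ θ in (0 : ℝ)..(2 * π),
    Real.cos (k * θ) * (1 - 2 * α * Real.cos θ + α ^ 2) ^ (-s)

/-- The coefficient `Ā` of the first-order resonant part of the averaged
perturbing function. -/
noncomputable def Abar (α : ℝ) : ℝ :=
  3 / 4 * α * laplaceCoeff (3 / 2) 1 α - 1 / 2 * α * laplaceCoeff (3 / 2) 3 α -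
    α ^ 2 * laplaceCoeff (3 / 2) 2 α

/-- The coefficient `B̄` of the first-order resonant part of the averaged
perturbing function. -/
noncomputable def Bbar (α : ℝ) : ℝ :=
  3 / 4 * α * laplaceCoeff (1 / 2) 1 α + 3 / 2 * α * laplaceCoeff (3 / 2) 0 α -
    α ^ 2 * laplaceCoeff (3 / 2) 1 α - 1 / 2 * α * laplaceCoeff (3 / 2) 2 α

private noncomputable def QQA (α u : ℝ) : ℝ := (-98813/500000 + -7917/62500 * α + 401187/500000 * α ^ 2 + -7917/62500 * α ^ 3) + (-67443/62500 + 1223813/500000 * α + -29763/31250 * α ^ 2 + -7917/62500 * α ^ 4) * u + (-34297/100000 + 64437/31250 * α + -234297/100000 * α ^ 2 + 7917/12500 * α ^ 3) * u ^ 2 + (-16259/125000 + -340627/250000 * α + -111263/125000 * α ^ 2) * u ^ 3 + (-601559/1000000 + 173339/500000 * α + -1093707/500000 * α ^ 2 + -317171/200000 * α ^ 4) * u ^ 4 + (971221/500000 + 4938073/1000000 * α + 968257/500000 * α ^ 2 + 6660591/1000000 * α ^ 3 + -741/125000 * α ^ 4) * u ^ 5 + (2354649/500000 + -1741183/500000 *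 α + 1220417/500000 * α ^ 2 + 247/10000 * α ^ 3 + 2354649/500000 * α ^ 4) * u ^ 6 + (15581/250000 + -19555259/1000000 * α + 1237/12500 * α ^ 2 + -19555259/1000000 * α ^ 3 + 15581/250000 * α ^ 4) * u ^ 7 + (-3900879/500000 + -25721/100000 * α + 23161/2500 * α ^ 2 + -25721/100000 * α ^ 3 + -50112/15625 * α ^ 4) * u ^ 8 + (-31167/500000 + 10954119/500000 * α + 17557/125000 * α ^ 2 + 206712/15625 * α ^ 3 + -31167/500000 * α ^ 4) * u ^ 9 + (51051/10000 + 128131/500000 * α + -2131341/250000 * α ^ 2 + 128131/500000 * α ^ 3) * u ^ 10 + (-969969/100000 * α + -65797/250000 * α ^ 2) * u ^ 11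

private lemma QQA_low (α u : ℝ) (h3 : α ^ 3 = 1/4) (h4 : α ^ 4 = α/4) (hal : (62996/100000:ℝ) ≤ α) (hau : α ≤ (6299606/10000000:ℝ)) (hsql : (62996/100000:ℝ)^2 ≤ α^2) (hsqu : α^2 ≤ (6299606/10000000:ℝ)^2)
    (hu1 : -1 ≤ u) (hu2 : u ≤ 0) : (1/250:ℝ) ≤ QQA α u := by
  unfold QQA
  rcases le_total u (-15/16) with hxl0 | hxl0
  · have hb1 : (0:ℝ) ≤ 16*u - (-16) := by linarith
    have hb2 : (0:ℝ) ≤ (-15) - 16*u := by linarith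
    have hsum : (0:ℝ) ≤ (133213/1000000 + 30549/250000 * α + -309181/500000 * α ^ 2 + 9777/50000 * α ^ 3 + 9777/200000 * α ^ 4) * ((-15) - 16*u) ^ 11 + (4440777/4000000 + 6513139/8000000 * α + -46890541/8000000 * α ^ 2 + 23988717/8000000 * α ^ 3 + 6033843/8000000 * α ^ 4) * ((16*u - (-16)) ^ 1 * ((-15) - 16*u) ^ 10) + (513163339/128000000 + 430074887/256000000 * α + -1602720837/64000000 * α ^ 2 + 4796310091/256000000 * α ^ 3 + 151855887/32000000 * α ^ 4) * ((16*u - (-16)) ^ 2 * ((-15) - 16*u) ^ 9) + (8234864437/1024000000 + -1178330793/819200000 * α + -32533553797/512000000 * α ^ 2 + 270598980901/4096000000 * α ^ 3 + 8630665297/512000000 * α ^ 4) * ((16*u - (-16)) ^ 3 * ((-15) - 16*u) ^ 8) + (608157152401/65536000000 + -119582475889/8192000000 * α + -695474619197/6553600000 * α ^ 2 + 4892922193757/32768000000 * α ^ 3 + 2515899675551/65536000000 * α ^ 4) * ((16*u - (-16)) ^ 4 * ((-15) - 16*u) ^ 7) + (2596447527319/524288000000 + -3702143690961/104857600000 * α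 + -12797294312277/104857600000 * α ^ 2 + 6025885514143/26214400000 * α ^ 3 + 3122444445603/52428800000 * α ^ 4) * ((16*u - (-16)) ^ 5 * ((-15) - 16*u) ^ 6) + (-14571082952553/8388608000000 + -818886389375321/16777216000000 * α + -822885765234191/8388608000000 * α ^ 2 + 831175215940617/3355443200000 * α ^ 3 + 542590421699119/8388608000000 * α ^ 4) * ((16*u - (-16)) ^ 6 * ((-15) - 16*u) ^ 5) + (-345246316966437/67108864000000 + -11715332503434039/268435456000000 * α + -1833356320509539/33554432000000 * α ^ 2 + 2015702506006173/10737418240000 * α ^ 3 + 663148492611163/13421772800000 * α ^ 4) * ((16*u - (-16)) ^ 7 * ((-15) - 16*u) ^ 4) + (-4433129674973717/1073741824000000 + -13866131077427347/536870912000000 * α + -10934216093739427/536870912000000 * α ^ 2 + 21124031232956193/214748364800000 * α ^ 3 + 11208593910331659/429496729600000 * α ^ 4) * ((16*u - (-16)) ^ 8 * ((-15) - 16*u) ^ 3) + (-12204407173724703/6871947673600000 + -168905954966836189/17179869184000000 * α + -16156457037275163/3435973836800000 * α ^ 2 + 23376976618296201/687194767360000 * α ^ 3 + 62522462915304477/6871947673600000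 * α ^ 4) * ((16*u - (-16)) ^ 9 * ((-15) - 16*u) ^ 2) + (-113716451867832637/274877906944000000 + -602216542492113787/274877906944000000 * α + -15529014525504543/27487790694400000 * α ^ 2 + 3848217838554730179/549755813888000000 * α ^ 3 + 32426025567130473/17179869184000000 * α ^ 4) * ((16*u - (-16)) ^ 10 * ((-15) - 16*u) ^ 1) + (-11318269977977189/274877906944000000 + -1917381313025472021/8796093022208000000 * α + -90892533961485669/4398046511104000000 * α ^ 2 + 357393758327039139/549755813888000000 * α ^ 3 + 1214536741346493/6871947673600000 * α ^ 4) * (16*u - (-16)) ^ 11 :=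
      (add_nonneg (add_nonneg (add_nonneg (add_nonneg (add_nonneg (add_nonneg (add_nonneg (add_nonneg (add_nonneg (add_nonneg (add_nonneg (mul_nonneg (show (0:ℝ) ≤ (133213/1000000 + 30549/250000 * α + -309181/500000 * α ^ 2 + 9777/50000 * α ^ 3 + 9777/200000 * α ^ 4) by linarith) (pow_nonneg hb2 11)) (mul_nonneg (show (0:ℝ) ≤ (4440777/4000000 + 6513139/8000000 * α + -46890541/8000000 * α ^ 2 + 23988717/8000000 * α ^ 3 + 6033843/8000000 * α ^ 4) by linarith) (mul_nonneg (pow_nonneg hb1 1) (pow_nonneg hb2 10)))) (mul_nonneg (show (0:ℝ) ≤ (513163339/128000000 + 430074887/256000000 * α + -1602720837/64000000 * α ^ 2 + 4796310091/256000000 * α ^ 3 + 151855887/32000000 * α ^ 4) by linarith) (mul_nonneg (pow_nonneg hb1 2) (pow_nonneg hb2 9)))) (mul_nonneg (show (0:ℝ) ≤ (8234864437/1024000000 + -1178330793/819200000 * α + -32533553797/512000000 * α ^ 2 + 270598980901/4096000000 * α ^ 3 + 8630665297/512000000 * α ^ 4) by linarith) (mul_nonneg (pow_nonneg hb1 3)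 (pow_nonneg hb2 8)))) (mul_nonneg (show (0:ℝ) ≤ (608157152401/65536000000 + -119582475889/8192000000 * α + -695474619197/6553600000 * α ^ 2 + 4892922193757/32768000000 * α ^ 3 + 2515899675551/65536000000 * α ^ 4) by linarith) (mul_nonneg (pow_nonneg hb1 4) (pow_nonneg hb2 7)))) (mul_nonneg (show (0:ℝ) ≤ (2596447527319/524288000000 + -3702143690961/104857600000 * α + -12797294312277/104857600000 * α ^ 2 + 6025885514143/26214400000 * α ^ 3 + 3122444445603/52428800000 * α ^ 4) by linarith) (mul_nonneg (pow_nonneg hb1 5) (pow_nonneg hb2 6)))) (mul_nonneg (show (0:ℝ) ≤ (-14571082952553/8388608000000 + -818886389375321/16777216000000 * α + -822885765234191/8388608000000 * α ^ 2 + 831175215940617/3355443200000 * α ^ 3 + 542590421699119/8388608000000 * α ^ 4) by linarith) (mul_nonneg (pow_nonneg hb1 6) (pow_nonneg hb2 5)))) (mul_nonneg (show (0:ℝ) ≤ (-345246316966437/67108864000000 + -11715332503434039/268435456000000 * α + -1833356320509539/33554432000000 * α ^ 2 + 2015702506006173/10737418240000 * α ^ 3 + 663148492611163/13421772800000 * α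 ^ 4) by linarith) (mul_nonneg (pow_nonneg hb1 7) (pow_nonneg hb2 4)))) (mul_nonneg (show (0:ℝ) ≤ (-4433129674973717/1073741824000000 + -13866131077427347/536870912000000 * α + -10934216093739427/536870912000000 * α ^ 2 + 21124031232956193/214748364800000 * α ^ 3 + 11208593910331659/429496729600000 * α ^ 4) by linarith) (mul_nonneg (pow_nonneg hb1 8) (pow_nonneg hb2 3)))) (mul_nonneg (show (0:ℝ) ≤ (-12204407173724703/6871947673600000 + -168905954966836189/17179869184000000 * α + -16156457037275163/3435973836800000 * α ^ 2 + 23376976618296201/687194767360000 * α ^ 3 + 62522462915304477/6871947673600000 * α ^ 4) by linarith) (mul_nonneg (pow_nonneg hb1 9) (pow_nonneg hb2 2)))) (mul_nonneg (show (0:ℝ) ≤ (-113716451867832637/274877906944000000 + -602216542492113787/274877906944000000 * α + -15529014525504543/27487790694400000 * α ^ 2 + 3848217838554730179/549755813888000000 * α ^ 3 + 32426025567130473/17179869184000000 * α ^ 4) by linarith) (mul_nonneg (pow_nonneg hb1 10) (pow_nonneg hb2 1)))) (mul_nonneg (show (0:ℝ) ≤ (-11318269977977189/274877906944000000 + -1917381313025472021/8796093022208000000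 * α + -90892533961485669/4398046511104000000 * α ^ 2 + 357393758327039139/549755813888000000 * α ^ 3 + 1214536741346493/6871947673600000 * α ^ 4) by linarith) (pow_nonneg hb1 11)))
    calc (1/250:ℝ) ≤ 1/250 + ((133213/1000000 + 30549/250000 * α + -309181/500000 * α ^ 2 + 9777/50000 * α ^ 3 + 9777/200000 * α ^ 4) * ((-15) - 16*u) ^ 11 + (4440777/4000000 + 6513139/8000000 * α + -46890541/8000000 * α ^ 2 + 23988717/8000000 * α ^ 3 + 6033843/8000000 * α ^ 4) * ((16*u - (-16)) ^ 1 * ((-15) - 16*u) ^ 10) + (513163339/128000000 + 430074887/256000000 * α + -1602720837/64000000 * α ^ 2 + 4796310091/256000000 * α ^ 3 + 151855887/32000000 * α ^ 4) * ((16*u - (-16)) ^ 2 * ((-15) - 16*u) ^ 9) + (8234864437/1024000000 + -1178330793/819200000 * α + -32533553797/512000000 * α ^ 2 + 270598980901/4096000000 * α ^ 3 + 8630665297/512000000 * α ^ 4) * ((16*u - (-16)) ^ 3 * ((-15) - 16*u) ^ 8) + (608157152401/65536000000 + -119582475889/8192000000 * α + -695474619197/6553600000 * α ^ 2 + 4892922193757/32768000000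 * α ^ 3 + 2515899675551/65536000000 * α ^ 4) * ((16*u - (-16)) ^ 4 * ((-15) - 16*u) ^ 7) + (2596447527319/524288000000 + -3702143690961/104857600000 * α + -12797294312277/104857600000 * α ^ 2 + 6025885514143/26214400000 * α ^ 3 + 3122444445603/52428800000 * α ^ 4) * ((16*u - (-16)) ^ 5 * ((-15) - 16*u) ^ 6) + (-14571082952553/8388608000000 + -818886389375321/16777216000000 * α + -822885765234191/8388608000000 * α ^ 2 + 831175215940617/3355443200000 * α ^ 3 + 542590421699119/8388608000000 * α ^ 4) * ((16*u - (-16)) ^ 6 * ((-15) - 16*u) ^ 5) + (-345246316966437/67108864000000 + -11715332503434039/268435456000000 * α + -1833356320509539/33554432000000 * α ^ 2 + 2015702506006173/10737418240000 * α ^ 3 + 663148492611163/13421772800000 * α ^ 4) * ((16*u - (-16)) ^ 7 * ((-15) - 16*u) ^ 4) + (-4433129674973717/1073741824000000 + -13866131077427347/536870912000000 * α + -10934216093739427/536870912000000 * α ^ 2 + 21124031232956193/214748364800000 * α ^ 3 + 11208593910331659/429496729600000 * α ^ 4) * ((16*u - (-16)) ^ 8 * ((-15) - 16*u) ^ 3)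 + (-12204407173724703/6871947673600000 + -168905954966836189/17179869184000000 * α + -16156457037275163/3435973836800000 * α ^ 2 + 23376976618296201/687194767360000 * α ^ 3 + 62522462915304477/6871947673600000 * α ^ 4) * ((16*u - (-16)) ^ 9 * ((-15) - 16*u) ^ 2) + (-113716451867832637/274877906944000000 + -602216542492113787/274877906944000000 * α + -15529014525504543/27487790694400000 * α ^ 2 + 3848217838554730179/549755813888000000 * α ^ 3 + 32426025567130473/17179869184000000 * α ^ 4) * ((16*u - (-16)) ^ 10 * ((-15) - 16*u) ^ 1) + (-11318269977977189/274877906944000000 + -1917381313025472021/8796093022208000000 * α + -90892533961485669/4398046511104000000 * α ^ 2 + 357393758327039139/549755813888000000 * α ^ 3 + 1214536741346493/6871947673600000 * α ^ 4) * (16*u - (-16)) ^ 11) := le_add_of_nonneg_right hsum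
      _ = _ := by ring
  · rcases le_total u (-7/8) with hxl1 | hxl1
    · have hb1 : (0:ℝ) ≤ 16*u - (-15) := by linarith
      have hb2 : (0:ℝ) ≤ (-14) - 16*u := by linarith
      have hsum : (0:ℝ) ≤ (-11318269977977189/274877906944000000 + -1917381313025472021/8796093022208000000 * α + -90892533961485669/4398046511104000000 * α ^ 2 + 357393758327039139/549755813888000000 * α ^ 3 + 1214536741346493/6871947673600000 * α ^ 4) * ((-14) - 16*u) ^ 11 + (-135285487647665521/274877906944000000 + -11455729763406371639/4398046511104000000 * α + 242503288464021081/2199023255552000000 * α ^ 2 + 4014444844640130879/549755813888000000 * α ^ 3 + 17186747603463321/8589934592000000 * α ^ 4) * ((16*u - (-15)) ^ 1 * ((-14) - 16*u) ^ 10) + (-4399166529670731/1717986918400000 + -30721287653417787427/2199023255552000000 * α + 450811200118774089/219902325555200000 * α ^ 2 + 101819256777454839/2748779069440000 * α ^ 3 + 70312341474489153/6871947673600000 * α ^ 4) * ((16*u - (-15)) ^ 2 * ((-14) - 16*u) ^ 9) + (-530861750752132357/68719476736000000 + -48953829730105039897/1099511627776000000 * α + 5573225200807923223/549755813888000000 *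 α ^ 2 + 3081574669946883579/27487790694400000 * α ^ 3 + 107290743827075373/3435973836800000 * α ^ 4) * ((16*u - (-15)) ^ 3 * ((-14) - 16*u) ^ 8) + (-5182608471070871/343597383680000 + -25804510797595856713/274877906944000000 * α + 3757930715221353383/137438953472000000 * α ^ 2 + 154676592984473037/687194767360000 * α ^ 3 + 27157926469202303/429496729600000 * α ^ 4) * ((16*u - (-15)) ^ 4 * ((-14) - 16*u) ^ 7) + (-172191731915775353/8589934592000000 + -18927181654699895491/137438953472000000 * α + 3232773775154196877/68719476736000000 * α ^ 2 + 5411049667856417103/17179869184000000 * α ^ 3 + 95841552374120393/1073741824000000 * α ^ 4) * ((16*u - (-15)) ^ 5 * ((-14) - 16*u) ^ 6) + (-19850456006514101/1073741824000000 + -9867577225933881811/68719476736000000 * α + 1883047507807690813/34359738368000000 * α ^ 2 + 84178365964962997/268435456000000 * α ^ 3 + 96280142799609459/1073741824000000 * α ^ 4) * ((16*u - (-15)) ^ 6 * ((-14) - 16*u) ^ 5) + (-25316982280996353/2147483648000000 + -731969414250579653/6871947673600000 * α + 151376709397965867/3435973836800000 * α ^ 2 + 954488179565553171/4294967296000000 *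 α ^ 3 + 34428811113257943/536870912000000 * α ^ 4) * ((16*u - (-15)) ^ 7 * ((-14) - 16*u) ^ 4) + (-5428815452757381/1073741824000000 + -1894122141565233929/34359738368000000 * α + 415844156524426599/17179869184000000 * α ^ 2 + 235998923972976507/2147483648000000 * α ^ 3 + 2148063509172777/67108864000000 * α ^ 4) * ((16*u - (-15)) ^ 8 * ((-14) - 16*u) ^ 3) + (-1469481556668381/1073741824000000 + -325867726682642067/17179869184000000 * α + 14968689175060697/1717986918400000 * α ^ 2 + 77576486570695427/2147483648000000 * α ^ 3 + 712842453572739/67108864000000 * α ^ 4) * ((16*u - (-15)) ^ 9 * ((-14) - 16*u) ^ 2) + (-13694029961091/67108864000000 + -33560750524633223/8589934592000000 * α + 7977200594730441/4294967296000000 * α ^ 2 + 1907463662872061/268435456000000 * α ^ 3 + 283170608132573/134217728000000 * α ^ 4) * ((16*u - (-15)) ^ 10 * ((-14) - 16*u) ^ 1) + (-3151376406713/268435456000000 + -1568061316664549/4294967296000000 * α + 382612657874571/2147483648000000 * α ^ 2 + 68052334924343/107374182400000 * α ^ 3 + 2550749393381/13421772800000 * α ^ 4) * (16*u - (-15)) ^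 11 :=
        (add_nonneg (add_nonneg (add_nonneg (add_nonneg (add_nonneg (add_nonneg (add_nonneg (add_nonneg (add_nonneg (add_nonneg (add_nonneg (mul_nonneg (show (0:ℝ) ≤ (-11318269977977189/274877906944000000 + -1917381313025472021/8796093022208000000 * α + -90892533961485669/4398046511104000000 * α ^ 2 + 357393758327039139/549755813888000000 * α ^ 3 + 1214536741346493/6871947673600000 * α ^ 4) by linarith) (pow_nonneg hb2 11)) (mul_nonneg (show (0:ℝ) ≤ (-135285487647665521/274877906944000000 + -11455729763406371639/4398046511104000000 * α + 242503288464021081/2199023255552000000 * α ^ 2 + 4014444844640130879/549755813888000000 * α ^ 3 + 17186747603463321/8589934592000000 * α ^ 4) by linarith) (mul_nonneg (pow_nonneg hb1 1) (pow_nonneg hb2 10)))) (mul_nonneg (show (0:ℝ) ≤ (-4399166529670731/1717986918400000 + -30721287653417787427/2199023255552000000 * α + 450811200118774089/219902325555200000 * α ^ 2 + 101819256777454839/2748779069440000 * α ^ 3 + 70312341474489153/6871947673600000 * α ^ 4) by linarith) (mul_nonneg (pow_nonneg hb1 2) (pow_nonneg hb2 9)))) (mul_nonneg (show (0:ℝ)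 ≤ (-530861750752132357/68719476736000000 + -48953829730105039897/1099511627776000000 * α + 5573225200807923223/549755813888000000 * α ^ 2 + 3081574669946883579/27487790694400000 * α ^ 3 + 107290743827075373/3435973836800000 * α ^ 4) by linarith) (mul_nonneg (pow_nonneg hb1 3) (pow_nonneg hb2 8)))) (mul_nonneg (show (0:ℝ) ≤ (-5182608471070871/343597383680000 + -25804510797595856713/274877906944000000 * α + 3757930715221353383/137438953472000000 * α ^ 2 + 154676592984473037/687194767360000 * α ^ 3 + 27157926469202303/429496729600000 * α ^ 4) by linarith) (mul_nonneg (pow_nonneg hb1 4) (pow_nonneg hb2 7)))) (mul_nonneg (show (0:ℝ) ≤ (-172191731915775353/8589934592000000 + -18927181654699895491/137438953472000000 * α + 3232773775154196877/68719476736000000 * α ^ 2 + 5411049667856417103/17179869184000000 * α ^ 3 + 95841552374120393/1073741824000000 * α ^ 4) by linarith) (mul_nonneg (pow_nonneg hb1 5) (pow_nonneg hb2 6)))) (mul_nonneg (show (0:ℝ) ≤ (-19850456006514101/1073741824000000 + -9867577225933881811/68719476736000000 * α + 1883047507807690813/34359738368000000 * α ^ 2 + 84178365964962997/268435456000000 *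 α ^ 3 + 96280142799609459/1073741824000000 * α ^ 4) by linarith) (mul_nonneg (pow_nonneg hb1 6) (pow_nonneg hb2 5)))) (mul_nonneg (show (0:ℝ) ≤ (-25316982280996353/2147483648000000 + -731969414250579653/6871947673600000 * α + 151376709397965867/3435973836800000 * α ^ 2 + 954488179565553171/4294967296000000 * α ^ 3 + 34428811113257943/536870912000000 * α ^ 4) by linarith) (mul_nonneg (pow_nonneg hb1 7) (pow_nonneg hb2 4)))) (mul_nonneg (show (0:ℝ) ≤ (-5428815452757381/1073741824000000 + -1894122141565233929/34359738368000000 * α + 415844156524426599/17179869184000000 * α ^ 2 + 235998923972976507/2147483648000000 * α ^ 3 + 2148063509172777/67108864000000 * α ^ 4) by linarith) (mul_nonneg (pow_nonneg hb1 8) (pow_nonneg hb2 3)))) (mul_nonneg (show (0:ℝ) ≤ (-1469481556668381/1073741824000000 + -325867726682642067/17179869184000000 * α + 14968689175060697/1717986918400000 * α ^ 2 + 77576486570695427/2147483648000000 * α ^ 3 + 712842453572739/67108864000000 * α ^ 4) by linarith) (mul_nonneg (pow_nonneg hb1 9) (pow_nonneg hb2 2)))) (mul_nonneg (show (0:ℝ)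 ≤ (-13694029961091/67108864000000 + -33560750524633223/8589934592000000 * α + 7977200594730441/4294967296000000 * α ^ 2 + 1907463662872061/268435456000000 * α ^ 3 + 283170608132573/134217728000000 * α ^ 4) by linarith) (mul_nonneg (pow_nonneg hb1 10) (pow_nonneg hb2 1)))) (mul_nonneg (show (0:ℝ) ≤ (-3151376406713/268435456000000 + -1568061316664549/4294967296000000 * α + 382612657874571/2147483648000000 * α ^ 2 + 68052334924343/107374182400000 * α ^ 3 + 2550749393381/13421772800000 * α ^ 4) by linarith) (pow_nonneg hb1 11)))
      calc (1/250:ℝ) ≤ 1/250 + ((-11318269977977189/274877906944000000 + -1917381313025472021/8796093022208000000 * α + -90892533961485669/4398046511104000000 * α ^ 2 + 357393758327039139/549755813888000000 * α ^ 3 + 1214536741346493/6871947673600000 * α ^ 4) * ((-14) - 16*u) ^ 11 + (-135285487647665521/274877906944000000 + -11455729763406371639/4398046511104000000 * α + 242503288464021081/2199023255552000000 * α ^ 2 + 4014444844640130879/549755813888000000 * α ^ 3 + 17186747603463321/8589934592000000 * α ^ 4) * ((16*u - (-15)) ^ 1 * ((-14) - 16*u) ^ 10) + (-4399166529670731/1717986918400000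 + -30721287653417787427/2199023255552000000 * α + 450811200118774089/219902325555200000 * α ^ 2 + 101819256777454839/2748779069440000 * α ^ 3 + 70312341474489153/6871947673600000 * α ^ 4) * ((16*u - (-15)) ^ 2 * ((-14) - 16*u) ^ 9) + (-530861750752132357/68719476736000000 + -48953829730105039897/1099511627776000000 * α + 5573225200807923223/549755813888000000 * α ^ 2 + 3081574669946883579/27487790694400000 * α ^ 3 + 107290743827075373/3435973836800000 * α ^ 4) * ((16*u - (-15)) ^ 3 * ((-14) - 16*u) ^ 8) + (-5182608471070871/343597383680000 + -25804510797595856713/274877906944000000 * α + 3757930715221353383/137438953472000000 * α ^ 2 + 154676592984473037/687194767360000 * α ^ 3 + 27157926469202303/429496729600000 * α ^ 4) * ((16*u - (-15)) ^ 4 * ((-14) - 16*u) ^ 7) + (-172191731915775353/8589934592000000 + -18927181654699895491/137438953472000000 * α + 3232773775154196877/68719476736000000 * α ^ 2 + 5411049667856417103/17179869184000000 * α ^ 3 + 95841552374120393/1073741824000000 * α ^ 4) * ((16*u - (-15)) ^ 5 * ((-14) - 16*u) ^ 6) + (-19850456006514101/1073741824000000 + -9867577225933881811/68719476736000000 * α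 + 1883047507807690813/34359738368000000 * α ^ 2 + 84178365964962997/268435456000000 * α ^ 3 + 96280142799609459/1073741824000000 * α ^ 4) * ((16*u - (-15)) ^ 6 * ((-14) - 16*u) ^ 5) + (-25316982280996353/2147483648000000 + -731969414250579653/6871947673600000 * α + 151376709397965867/3435973836800000 * α ^ 2 + 954488179565553171/4294967296000000 * α ^ 3 + 34428811113257943/536870912000000 * α ^ 4) * ((16*u - (-15)) ^ 7 * ((-14) - 16*u) ^ 4) + (-5428815452757381/1073741824000000 + -1894122141565233929/34359738368000000 * α + 415844156524426599/17179869184000000 * α ^ 2 + 235998923972976507/2147483648000000 * α ^ 3 + 2148063509172777/67108864000000 * α ^ 4) * ((16*u - (-15)) ^ 8 * ((-14) - 16*u) ^ 3) + (-1469481556668381/1073741824000000 + -325867726682642067/17179869184000000 * α + 14968689175060697/1717986918400000 * α ^ 2 + 77576486570695427/2147483648000000 * α ^ 3 + 712842453572739/67108864000000 * α ^ 4) * ((16*u - (-15)) ^ 9 * ((-14) - 16*u) ^ 2) + (-13694029961091/67108864000000 + -33560750524633223/8589934592000000 * α + 7977200594730441/4294967296000000 * α ^ 2 + 1907463662872061/268435456000000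 * α ^ 3 + 283170608132573/134217728000000 * α ^ 4) * ((16*u - (-15)) ^ 10 * ((-14) - 16*u) ^ 1) + (-3151376406713/268435456000000 + -1568061316664549/4294967296000000 * α + 382612657874571/2147483648000000 * α ^ 2 + 68052334924343/107374182400000 * α ^ 3 + 2550749393381/13421772800000 * α ^ 4) * (16*u - (-15)) ^ 11) := le_add_of_nonneg_right hsum
        _ = _ := by ring
    · rcases le_total u (-3/4) with hxl2 | hxl2
      · have hb1 : (0:ℝ) ≤ 8*u - (-7) := by linarith
        have hb2 : (0:ℝ) ≤ (-6) - 8*u := by linarith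
        have hsum : (0:ℝ) ≤ (-3151376406713/268435456000000 + -1568061316664549/4294967296000000 * α + 382612657874571/2147483648000000 * α ^ 2 + 68052334924343/107374182400000 * α ^ 3 + 2550749393381/13421772800000 * α ^ 4) * ((-6) - 8*u) ^ 11 + (5556818267199/268435456000000 + -9092636462648447/2147483648000000 * α + 2324508557565201/1073741824000000 * α ^ 2 + 3598780611028351/536870912000000 * α ^ 3 + 34425760443823/16777216000000 * α ^ 4) * ((8*u - (-7)) ^ 1 * ((-6) - 8*u) ^ 10) + (64288578167631/67108864000000 + -23808890673149283/1073741824000000 * α + 249206936813029/21474836480000 * α ^ 2 + 2138796995474629/67108864000000 * α ^ 3 + 669356318931741/67108864000000 * α ^ 4) * ((8*u - (-7)) ^ 2 * ((-6) - 8*u) ^ 9) + (15109040574969/2684354560000 + -7447892053255309/107374182400000 * α + 9837754009269087/268435456000000 * α ^ 2 + 2417095802491251/26843545600000 * α ^ 3 + 968161678171653/33554432000000 * α ^ 4) * ((8*u - (-7)) ^ 3 * ((-6) - 8*u) ^ 8) + (142191189057699/8388608000000 + -19354796398373881/134217728000000 * α + 5121569345387607/67108864000000 * α ^ 2 + 2821098410940117/16777216000000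 * α ^ 3 + 231758398215411/4194304000000 * α ^ 4) * ((8*u - (-7)) ^ 4 * ((-6) - 8*u) ^ 7) + (53252395908247/1677721600000 + -2810163547494863/13421772800000 * α + 3709879555813093/33554432000000 * α ^ 2 + 3659110038096751/16777216000000 * α ^ 3 + 154393691521077/2097152000000 * α ^ 4) * ((8*u - (-7)) ^ 5 * ((-6) - 8*u) ^ 6) + (83091712668007/2097152000000 + -7272756166668403/33554432000000 * α + 382787965199753/3355443200000 * α ^ 2 + 42070905000543/209715200000 * α ^ 3 + 146153080470619/2097152000000 * α ^ 4) * ((8*u - (-7)) ^ 6 * ((-6) - 8*u) ^ 5) + (70768009692889/2097152000000 + -536945031066221/3355443200000 * α + 704801214065759/8388608000000 * α ^ 2 + 549068295016107/4194304000000 * α ^ 3 + 49180993419827/1048576000000 * α ^ 4) * ((8*u - (-7)) ^ 7 * ((-6) - 8*u) ^ 4) + (20413386177203/1048576000000 + -277108388990021/3355443200000 * α + 363625351141399/8388608000000 * α ^ 2 + 24917355426447/419430400000 * α ^ 3 + 2884339951809/131072000000 * α ^ 4) * ((8*u - (-7)) ^ 8 * ((-6) - 8*u) ^ 3) + (7658708024811/1048576000000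 + -238030626381499/8388608000000 * α + 501075158457/33554432000 * α ^ 2 + 37452445694787/2097152000000 * α ^ 3 + 898970743779/131072000000 * α ^ 4) * ((8*u - (-7)) ^ 9 * ((-6) - 8*u) ^ 2) + (422708469923/262144000000 + -24502759025543/4194304000000 * α + 6486295507449/2097152000000 * α ^ 2 + 167807234127/52428800000 * α ^ 3 + 67038022833/52428800000 * α ^ 4) * ((8*u - (-7)) ^ 10 * ((-6) - 8*u) ^ 1) + (41759595757/262144000000 + -1144946542509/2097152000000 * α + 305965775283/1048576000000 * α ^ 2 + 27163842447/104857600000 * α ^ 3 + 2833050969/26214400000 * α ^ 4) * (8*u - (-7)) ^ 11 :=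
          (add_nonneg (add_nonneg (add_nonneg (add_nonneg (add_nonneg (add_nonneg (add_nonneg (add_nonneg (add_nonneg (add_nonneg (add_nonneg (mul_nonneg (show (0:ℝ) ≤ (-3151376406713/268435456000000 + -1568061316664549/4294967296000000 * α + 382612657874571/2147483648000000 * α ^ 2 + 68052334924343/107374182400000 * α ^ 3 + 2550749393381/13421772800000 * α ^ 4) by linarith) (pow_nonneg hb2 11)) (mul_nonneg (show (0:ℝ) ≤ (5556818267199/268435456000000 + -9092636462648447/2147483648000000 * α + 2324508557565201/1073741824000000 * α ^ 2 + 3598780611028351/536870912000000 * α ^ 3 + 34425760443823/16777216000000 * α ^ 4) by linarith) (mul_nonneg (pow_nonneg hb1 1) (pow_nonneg hb2 10)))) (mul_nonneg (show (0:ℝ) ≤ (64288578167631/67108864000000 + -23808890673149283/1073741824000000 * α + 249206936813029/21474836480000 * α ^ 2 + 2138796995474629/67108864000000 * α ^ 3 + 669356318931741/67108864000000 * α ^ 4) by linarith) (mul_nonneg (pow_nonneg hb1 2) (pow_nonneg hb2 9)))) (mul_nonneg (show (0:ℝ) ≤ (15109040574969/2684354560000 + -7447892053255309/107374182400000 * α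 + 9837754009269087/268435456000000 * α ^ 2 + 2417095802491251/26843545600000 * α ^ 3 + 968161678171653/33554432000000 * α ^ 4) by linarith) (mul_nonneg (pow_nonneg hb1 3) (pow_nonneg hb2 8)))) (mul_nonneg (show (0:ℝ) ≤ (142191189057699/8388608000000 + -19354796398373881/134217728000000 * α + 5121569345387607/67108864000000 * α ^ 2 + 2821098410940117/16777216000000 * α ^ 3 + 231758398215411/4194304000000 * α ^ 4) by linarith) (mul_nonneg (pow_nonneg hb1 4) (pow_nonneg hb2 7)))) (mul_nonneg (show (0:ℝ) ≤ (53252395908247/1677721600000 + -2810163547494863/13421772800000 * α + 3709879555813093/33554432000000 * α ^ 2 + 3659110038096751/16777216000000 * α ^ 3 + 154393691521077/2097152000000 * α ^ 4) by linarith) (mul_nonneg (pow_nonneg hb1 5) (pow_nonneg hb2 6)))) (mul_nonneg (show (0:ℝ) ≤ (83091712668007/2097152000000 + -7272756166668403/33554432000000 * α + 382787965199753/3355443200000 * α ^ 2 + 42070905000543/209715200000 * α ^ 3 + 146153080470619/2097152000000 * α ^ 4) by linarith) (mul_nonneg (pow_nonneg hb1 6) (pow_nonneg hb2 5)))) (mul_nonneg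 (show (0:ℝ) ≤ (70768009692889/2097152000000 + -536945031066221/3355443200000 * α + 704801214065759/8388608000000 * α ^ 2 + 549068295016107/4194304000000 * α ^ 3 + 49180993419827/1048576000000 * α ^ 4) by linarith) (mul_nonneg (pow_nonneg hb1 7) (pow_nonneg hb2 4)))) (mul_nonneg (show (0:ℝ) ≤ (20413386177203/1048576000000 + -277108388990021/3355443200000 * α + 363625351141399/8388608000000 * α ^ 2 + 24917355426447/419430400000 * α ^ 3 + 2884339951809/131072000000 * α ^ 4) by linarith) (mul_nonneg (pow_nonneg hb1 8) (pow_nonneg hb2 3)))) (mul_nonneg (show (0:ℝ) ≤ (7658708024811/1048576000000 + -238030626381499/8388608000000 * α + 501075158457/33554432000 * α ^ 2 + 37452445694787/2097152000000 * α ^ 3 + 898970743779/131072000000 * α ^ 4) by linarith) (mul_nonneg (pow_nonneg hb1 9) (pow_nonneg hb2 2)))) (mul_nonneg (show (0:ℝ) ≤ (422708469923/262144000000 + -24502759025543/4194304000000 * α + 6486295507449/2097152000000 * α ^ 2 + 167807234127/52428800000 * α ^ 3 + 67038022833/52428800000 * α ^ 4) by linarith) (mul_nonneg (pow_nonneg hb1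 10) (pow_nonneg hb2 1)))) (mul_nonneg (show (0:ℝ) ≤ (41759595757/262144000000 + -1144946542509/2097152000000 * α + 305965775283/1048576000000 * α ^ 2 + 27163842447/104857600000 * α ^ 3 + 2833050969/26214400000 * α ^ 4) by linarith) (pow_nonneg hb1 11)))
        calc (1/250:ℝ) ≤ 1/250 + ((-3151376406713/268435456000000 + -1568061316664549/4294967296000000 * α + 382612657874571/2147483648000000 * α ^ 2 + 68052334924343/107374182400000 * α ^ 3 + 2550749393381/13421772800000 * α ^ 4) * ((-6) - 8*u) ^ 11 + (5556818267199/268435456000000 + -9092636462648447/2147483648000000 * α + 2324508557565201/1073741824000000 * α ^ 2 + 3598780611028351/536870912000000 * α ^ 3 + 34425760443823/16777216000000 * α ^ 4) * ((8*u - (-7)) ^ 1 * ((-6) - 8*u) ^ 10) + (64288578167631/67108864000000 + -23808890673149283/1073741824000000 * α + 249206936813029/21474836480000 * α ^ 2 + 2138796995474629/67108864000000 * α ^ 3 + 669356318931741/67108864000000 * α ^ 4) * ((8*u - (-7)) ^ 2 * ((-6) - 8*u) ^ 9) + (15109040574969/2684354560000 + -7447892053255309/107374182400000 * α + 9837754009269087/268435456000000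 * α ^ 2 + 2417095802491251/26843545600000 * α ^ 3 + 968161678171653/33554432000000 * α ^ 4) * ((8*u - (-7)) ^ 3 * ((-6) - 8*u) ^ 8) + (142191189057699/8388608000000 + -19354796398373881/134217728000000 * α + 5121569345387607/67108864000000 * α ^ 2 + 2821098410940117/16777216000000 * α ^ 3 + 231758398215411/4194304000000 * α ^ 4) * ((8*u - (-7)) ^ 4 * ((-6) - 8*u) ^ 7) + (53252395908247/1677721600000 + -2810163547494863/13421772800000 * α + 3709879555813093/33554432000000 * α ^ 2 + 3659110038096751/16777216000000 * α ^ 3 + 154393691521077/2097152000000 * α ^ 4) * ((8*u - (-7)) ^ 5 * ((-6) - 8*u) ^ 6) + (83091712668007/2097152000000 + -7272756166668403/33554432000000 * α + 382787965199753/3355443200000 * α ^ 2 + 42070905000543/209715200000 * α ^ 3 + 146153080470619/2097152000000 * α ^ 4) * ((8*u - (-7)) ^ 6 * ((-6) - 8*u) ^ 5) + (70768009692889/2097152000000 + -536945031066221/3355443200000 * α + 704801214065759/8388608000000 * α ^ 2 + 549068295016107/4194304000000 * α ^ 3 + 49180993419827/1048576000000 * α ^ 4) * ((8*u - (-7)) ^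 7 * ((-6) - 8*u) ^ 4) + (20413386177203/1048576000000 + -277108388990021/3355443200000 * α + 363625351141399/8388608000000 * α ^ 2 + 24917355426447/419430400000 * α ^ 3 + 2884339951809/131072000000 * α ^ 4) * ((8*u - (-7)) ^ 8 * ((-6) - 8*u) ^ 3) + (7658708024811/1048576000000 + -238030626381499/8388608000000 * α + 501075158457/33554432000 * α ^ 2 + 37452445694787/2097152000000 * α ^ 3 + 898970743779/131072000000 * α ^ 4) * ((8*u - (-7)) ^ 9 * ((-6) - 8*u) ^ 2) + (422708469923/262144000000 + -24502759025543/4194304000000 * α + 6486295507449/2097152000000 * α ^ 2 + 167807234127/52428800000 * α ^ 3 + 67038022833/52428800000 * α ^ 4) * ((8*u - (-7)) ^ 10 * ((-6) - 8*u) ^ 1) + (41759595757/262144000000 + -1144946542509/2097152000000 * α + 305965775283/1048576000000 * α ^ 2 + 27163842447/104857600000 * α ^ 3 + 2833050969/26214400000 * α ^ 4) * (8*u - (-7)) ^ 11) := le_add_of_nonneg_right hsum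
          _ = _ := by ring
      · rcases le_total u (-1/2) with hxl3 | hxl3
        · have hb1 : (0:ℝ) ≤ 4*u - (-3) := by linarith
          have hb2 : (0:ℝ) ≤ (-2) - 4*u := by linarith
          have hsum : (0:ℝ) ≤ (41759595757/262144000000 + -1144946542509/2097152000000 * α + 305965775283/1048576000000 * α ^ 2 + 27163842447/104857600000 * α ^ 3 + 2833050969/26214400000 * α ^ 4) * ((-2) - 4*u) ^ 11 + (106529944027/52428800000 + -6640238438627/1048576000000 * α + 361057507689/104857600000 * α ^ 2 + 225177864243/104857600000 * α ^ 3 + 3306582393/3276800000 * α ^ 4) * ((4*u - (-3)) ^ 1 * ((-2) - 4*u) ^ 10) + (1483599864573/131072000000 + -17424098539291/524288000000 * α + 974929417437/52428800000 * α ^ 2 + 124956727341/16384000000 * α ^ 3 + 551980698441/131072000000 * α ^ 4) * ((4*u - (-3)) ^ 2 * ((-2) - 4*u) ^ 9) + (37513604591/1024000000 + -27300551110381/262144000000 * α + 7953894627487/131072000000 * α ^ 2 + 1969618393251/131072000000 * α ^ 3 + 136833481131/13107200000 * α ^ 4) * ((4*u - (-3)) ^ 3 * ((-2) - 4*u) ^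 8) + (315593631287/4096000000 + -14182763061613/65536000000 * α + 4343926482071/32768000000 * α ^ 2 + 142226006373/8192000000 * α ^ 3 + 28201151777/1638400000 * α ^ 4) * ((4*u - (-3)) ^ 4 * ((-2) - 4*u) ^ 7) + (910417308289/8192000000 + -2051475666287/6553600000 * α + 3322772186017/16384000000 * α ^ 2 + 34161140829/3276800000 * α ^ 3 + 16384161811/819200000 * α ^ 4) * ((4*u - (-3)) ^ 5 * ((-2) - 4*u) ^ 6) + (461237743963/4096000000 + -1053794079467/3276800000 * α + 362119152917/1638400000 * α ^ 2 + -18010337/163840000 * α ^ 3 + 69144970851/4096000000 * α ^ 4) * ((4*u - (-3)) ^ 6 * ((-2) - 4*u) ^ 5) + (82303499157/1024000000 + -384530123621/1638400000 * α + 701286035871/4096000000 * α ^ 2 + -23164927839/4096000000 * α ^ 3 + 21405461241/2048000000 * α ^ 4) * ((4*u - (-3)) ^ 7 * ((-2) - 4*u) ^ 4) + (40634175291/1024000000 + -39083675057/327680000 * α + 377929928847/4096000000 * α ^ 2 + -9953105199/2048000000 * α ^ 3 + 119959737/25600000 * α ^ 4) * ((4*u - (-3)) ^ 8 * ((-2)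 - 4*u) ^ 3) + (13233340143/1024000000 + -164707971831/4096000000 * α + 67429603969/2048000000 * α ^ 2 + -4322995057/2048000000 * α ^ 3 + 74372211/51200000 * α ^ 4) * ((4*u - (-3)) ^ 9 * ((-2) - 4*u) ^ 2) + (51211917/20480000 + -16581888743/2048000000 * α + 1433673801/204800000 * α ^ 2 + -126508243/256000000 * α ^ 3 + 143064857/512000000 * α ^ 4) * ((4*u - (-3)) ^ 10 * ((-2) - 4*u) ^ 1) + (2788649/12800000 + -755473649/1024000000 * α + 344041299/512000000 * α ^ 2 + -25552661/512000000 * α ^ 3 + 6424303/256000000 * α ^ 4) * (4*u - (-3)) ^ 11 :=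
            (add_nonneg (add_nonneg (add_nonneg (add_nonneg (add_nonneg (add_nonneg (add_nonneg (add_nonneg (add_nonneg (add_nonneg (add_nonneg (mul_nonneg (show (0:ℝ) ≤ (41759595757/262144000000 + -1144946542509/2097152000000 * α + 305965775283/1048576000000 * α ^ 2 + 27163842447/104857600000 * α ^ 3 + 2833050969/26214400000 * α ^ 4) by linarith) (pow_nonneg hb2 11)) (mul_nonneg (show (0:ℝ) ≤ (106529944027/52428800000 + -6640238438627/1048576000000 * α + 361057507689/104857600000 * α ^ 2 + 225177864243/104857600000 * α ^ 3 + 3306582393/3276800000 * α ^ 4) by linarith) (mul_nonneg (pow_nonneg hb1 1) (pow_nonneg hb2 10)))) (mul_nonneg (show (0:ℝ) ≤ (1483599864573/131072000000 + -17424098539291/524288000000 * α + 974929417437/52428800000 * α ^ 2 + 124956727341/16384000000 * α ^ 3 + 551980698441/131072000000 * α ^ 4) by linarith) (mul_nonneg (pow_nonneg hb1 2) (pow_nonneg hb2 9)))) (mul_nonneg (show (0:ℝ) ≤ (37513604591/1024000000 + -27300551110381/262144000000 * α + 7953894627487/131072000000 * α ^ 2 + 1969618393251/131072000000 * α ^ 3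 + 136833481131/13107200000 * α ^ 4) by linarith) (mul_nonneg (pow_nonneg hb1 3) (pow_nonneg hb2 8)))) (mul_nonneg (show (0:ℝ) ≤ (315593631287/4096000000 + -14182763061613/65536000000 * α + 4343926482071/32768000000 * α ^ 2 + 142226006373/8192000000 * α ^ 3 + 28201151777/1638400000 * α ^ 4) by linarith) (mul_nonneg (pow_nonneg hb1 4) (pow_nonneg hb2 7)))) (mul_nonneg (show (0:ℝ) ≤ (910417308289/8192000000 + -2051475666287/6553600000 * α + 3322772186017/16384000000 * α ^ 2 + 34161140829/3276800000 * α ^ 3 + 16384161811/819200000 * α ^ 4) by linarith) (mul_nonneg (pow_nonneg hb1 5) (pow_nonneg hb2 6)))) (mul_nonneg (show (0:ℝ) ≤ (461237743963/4096000000 + -1053794079467/3276800000 * α + 362119152917/1638400000 * α ^ 2 + -18010337/163840000 * α ^ 3 + 69144970851/4096000000 * α ^ 4) by linarith) (mul_nonneg (pow_nonneg hb1 6) (pow_nonneg hb2 5)))) (mul_nonneg (show (0:ℝ) ≤ (82303499157/1024000000 + -384530123621/1638400000 * α + 701286035871/4096000000 * α ^ 2 + -23164927839/4096000000 * α ^ 3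 + 21405461241/2048000000 * α ^ 4) by linarith) (mul_nonneg (pow_nonneg hb1 7) (pow_nonneg hb2 4)))) (mul_nonneg (show (0:ℝ) ≤ (40634175291/1024000000 + -39083675057/327680000 * α + 377929928847/4096000000 * α ^ 2 + -9953105199/2048000000 * α ^ 3 + 119959737/25600000 * α ^ 4) by linarith) (mul_nonneg (pow_nonneg hb1 8) (pow_nonneg hb2 3)))) (mul_nonneg (show (0:ℝ) ≤ (13233340143/1024000000 + -164707971831/4096000000 * α + 67429603969/2048000000 * α ^ 2 + -4322995057/2048000000 * α ^ 3 + 74372211/51200000 * α ^ 4) by linarith) (mul_nonneg (pow_nonneg hb1 9) (pow_nonneg hb2 2)))) (mul_nonneg (show (0:ℝ) ≤ (51211917/20480000 + -16581888743/2048000000 * α + 1433673801/204800000 * α ^ 2 + -126508243/256000000 * α ^ 3 + 143064857/512000000 * α ^ 4) by linarith) (mul_nonneg (pow_nonneg hb1 10) (pow_nonneg hb2 1)))) (mul_nonneg (show (0:ℝ) ≤ (2788649/12800000 + -755473649/1024000000 * α + 344041299/512000000 * α ^ 2 + -25552661/512000000 * α ^ 3 + 6424303/256000000 * α ^ 4)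 by linarith) (pow_nonneg hb1 11)))
          calc (1/250:ℝ) ≤ 1/250 + ((41759595757/262144000000 + -1144946542509/2097152000000 * α + 305965775283/1048576000000 * α ^ 2 + 27163842447/104857600000 * α ^ 3 + 2833050969/26214400000 * α ^ 4) * ((-2) - 4*u) ^ 11 + (106529944027/52428800000 + -6640238438627/1048576000000 * α + 361057507689/104857600000 * α ^ 2 + 225177864243/104857600000 * α ^ 3 + 3306582393/3276800000 * α ^ 4) * ((4*u - (-3)) ^ 1 * ((-2) - 4*u) ^ 10) + (1483599864573/131072000000 + -17424098539291/524288000000 * α + 974929417437/52428800000 * α ^ 2 + 124956727341/16384000000 * α ^ 3 + 551980698441/131072000000 * α ^ 4) * ((4*u - (-3)) ^ 2 * ((-2) - 4*u) ^ 9) + (37513604591/1024000000 + -27300551110381/262144000000 * α + 7953894627487/131072000000 * α ^ 2 + 1969618393251/131072000000 * α ^ 3 + 136833481131/13107200000 * α ^ 4) * ((4*u - (-3)) ^ 3 * ((-2) - 4*u) ^ 8) + (315593631287/4096000000 + -14182763061613/65536000000 * α + 4343926482071/32768000000 * α ^ 2 + 142226006373/8192000000 * α ^ 3 + 28201151777/1638400000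 * α ^ 4) * ((4*u - (-3)) ^ 4 * ((-2) - 4*u) ^ 7) + (910417308289/8192000000 + -2051475666287/6553600000 * α + 3322772186017/16384000000 * α ^ 2 + 34161140829/3276800000 * α ^ 3 + 16384161811/819200000 * α ^ 4) * ((4*u - (-3)) ^ 5 * ((-2) - 4*u) ^ 6) + (461237743963/4096000000 + -1053794079467/3276800000 * α + 362119152917/1638400000 * α ^ 2 + -18010337/163840000 * α ^ 3 + 69144970851/4096000000 * α ^ 4) * ((4*u - (-3)) ^ 6 * ((-2) - 4*u) ^ 5) + (82303499157/1024000000 + -384530123621/1638400000 * α + 701286035871/4096000000 * α ^ 2 + -23164927839/4096000000 * α ^ 3 + 21405461241/2048000000 * α ^ 4) * ((4*u - (-3)) ^ 7 * ((-2) - 4*u) ^ 4) + (40634175291/1024000000 + -39083675057/327680000 * α + 377929928847/4096000000 * α ^ 2 + -9953105199/2048000000 * α ^ 3 + 119959737/25600000 * α ^ 4) * ((4*u - (-3)) ^ 8 * ((-2) - 4*u) ^ 3) + (13233340143/1024000000 + -164707971831/4096000000 * α + 67429603969/2048000000 * α ^ 2 + -4322995057/2048000000 * α ^ 3 + 74372211/51200000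 * α ^ 4) * ((4*u - (-3)) ^ 9 * ((-2) - 4*u) ^ 2) + (51211917/20480000 + -16581888743/2048000000 * α + 1433673801/204800000 * α ^ 2 + -126508243/256000000 * α ^ 3 + 143064857/512000000 * α ^ 4) * ((4*u - (-3)) ^ 10 * ((-2) - 4*u) ^ 1) + (2788649/12800000 + -755473649/1024000000 * α + 344041299/512000000 * α ^ 2 + -25552661/512000000 * α ^ 3 + 6424303/256000000 * α ^ 4) * (4*u - (-3)) ^ 11) := le_add_of_nonneg_right hsum
            _ = _ := by ring
        · have hb1 : (0:ℝ) ≤ 2*u - (-1) := by linarith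
          have hb2 : (0:ℝ) ≤ (0) - 2*u := by linarith
          have hsum : (0:ℝ) ≤ (2788649/12800000 + -755473649/1024000000 * α + 344041299/512000000 * α ^ 2 + -25552661/512000000 * α ^ 3 + 6424303/256000000 * α ^ 4) * ((0) - 2*u) ^ 11 + (112042083/51200000 + -4174370837/512000000 * α + 2092496931/256000000 * α ^ 2 + -337204841/512000000 * α ^ 3 + 34468571/128000000 * α ^ 4) * ((2*u - (-1)) ^ 1 * ((0) - 2*u) ^ 10) + (2432027493/256000000 + -10302691449/256000000 * α + 2834872103/64000000 * α ^ 2 + -447643273/128000000 * α ^ 3 + 75105699/51200000 * α ^ 4) * ((2*u - (-1)) ^ 2 * ((0) - 2*u) ^ 9) + (2989899777/128000000 + -14999191049/128000000 * α + 281968431/2000000 * α ^ 2 + -1427101809/128000000 * α ^ 3 + 7770111/1600000 * α ^ 4) * ((2*u - (-1)) ^ 3 * ((0) - 2*u) ^ 8) + (1101351/31250 + -28621273213/128000000 * α + 1876922643/6400000 * α ^ 2 + -3176750961/128000000 * α ^ 3 + 163227327/16000000 * α ^ 4) * ((2*u - (-1)) ^ 4 * ((0) - 2*u) ^ 7) +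 (1018900919/32000000 + -9374674361/32000000 * α + 13437838009/32000000 * α ^ 2 + -318560791/8000000 * α ^ 3 + 446525811/32000000 * α ^ 4) * ((2*u - (-1)) ^ 5 * ((0) - 2*u) ^ 6) + (104656213/8000000 + -1711714529/6400000 * α + 6777535237/16000000 * α ^ 2 + -1453761519/32000000 * α ^ 3 + 201710939/16000000 * α ^ 4) * ((2*u - (-1)) ^ 6 * ((0) - 2*u) ^ 5) + (-76568887/16000000 + -1349738309/8000000 * α + 96510413/320000 * α ^ 2 + -451269/12500 * α ^ 3 + 24003853/3200000 * α ^ 4) * ((2*u - (-1)) ^ 7 * ((0) - 2*u) ^ 4) + (-19488467/2000000 + -1138603/16000 * α + 297321301/2000000 * α ^ 2 + -973791/50000 * α ^ 3 + 71253/25000 * α ^ 4) * ((2*u - (-1)) ^ 8 * ((0) - 2*u) ^ 3) + (-2311893/400000 + -9344797/500000 * α + 19322763/400000 * α ^ 2 + -340431/50000 * α ^ 3 + 7917/12500 * α ^ 4) * ((2*u - (-1)) ^ 9 * ((0) - 2*u) ^ 2) + (-839171/500000 + -523441/200000 * α + 4651161/500000 * α ^ 2 + -87087/62500 * α ^ 3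 + 7917/125000 * α ^ 4) * ((2*u - (-1)) ^ 10 * ((0) - 2*u) ^ 1) + (-100813/500000 + -7917/62500 * α + 401187/500000 * α ^ 2 + -7917/62500 * α ^ 3) * (2*u - (-1)) ^ 11 :=
            (add_nonneg (add_nonneg (add_nonneg (add_nonneg (add_nonneg (add_nonneg (add_nonneg (add_nonneg (add_nonneg (add_nonneg (add_nonneg (mul_nonneg (show (0:ℝ) ≤ (2788649/12800000 + -755473649/1024000000 * α + 344041299/512000000 * α ^ 2 + -25552661/512000000 * α ^ 3 + 6424303/256000000 * α ^ 4) by linarith) (pow_nonneg hb2 11)) (mul_nonneg (show (0:ℝ) ≤ (112042083/51200000 + -4174370837/512000000 * α + 2092496931/256000000 * α ^ 2 + -337204841/512000000 * α ^ 3 + 34468571/128000000 * α ^ 4) by linarith) (mul_nonneg (pow_nonneg hb1 1) (pow_nonneg hb2 10)))) (mul_nonneg (show (0:ℝ) ≤ (2432027493/256000000 + -10302691449/256000000 * α + 2834872103/64000000 * α ^ 2 + -447643273/128000000 * α ^ 3 + 75105699/51200000 * α ^ 4) by linarith) (mul_nonneg (pow_nonneg hb1 2) (pow_nonneg hb2 9))))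 (mul_nonneg (show (0:ℝ) ≤ (2989899777/128000000 + -14999191049/128000000 * α + 281968431/2000000 * α ^ 2 + -1427101809/128000000 * α ^ 3 + 7770111/1600000 * α ^ 4) by linarith) (mul_nonneg (pow_nonneg hb1 3) (pow_nonneg hb2 8)))) (mul_nonneg (show (0:ℝ) ≤ (1101351/31250 + -28621273213/128000000 * α + 1876922643/6400000 * α ^ 2 + -3176750961/128000000 * α ^ 3 + 163227327/16000000 * α ^ 4) by linarith) (mul_nonneg (pow_nonneg hb1 4) (pow_nonneg hb2 7)))) (mul_nonneg (show (0:ℝ) ≤ (1018900919/32000000 + -9374674361/32000000 * α + 13437838009/32000000 * α ^ 2 + -318560791/8000000 * α ^ 3 + 446525811/32000000 * α ^ 4) by linarith) (mul_nonneg (pow_nonneg hb1 5) (pow_nonneg hb2 6)))) (mul_nonneg (show (0:ℝ) ≤ (104656213/8000000 + -1711714529/6400000 * α + 6777535237/16000000 * α ^ 2 + -1453761519/32000000 * α ^ 3 + 201710939/16000000 * α ^ 4) by linarith) (mul_nonneg (pow_nonneg hb1 6) (pow_nonneg hb2 5)))) (mul_nonneg (show (0:ℝ) ≤ (-76568887/16000000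 + -1349738309/8000000 * α + 96510413/320000 * α ^ 2 + -451269/12500 * α ^ 3 + 24003853/3200000 * α ^ 4) by linarith) (mul_nonneg (pow_nonneg hb1 7) (pow_nonneg hb2 4)))) (mul_nonneg (show (0:ℝ) ≤ (-19488467/2000000 + -1138603/16000 * α + 297321301/2000000 * α ^ 2 + -973791/50000 * α ^ 3 + 71253/25000 * α ^ 4) by linarith) (mul_nonneg (pow_nonneg hb1 8) (pow_nonneg hb2 3)))) (mul_nonneg (show (0:ℝ) ≤ (-2311893/400000 + -9344797/500000 * α + 19322763/400000 * α ^ 2 + -340431/50000 * α ^ 3 + 7917/12500 * α ^ 4) by linarith) (mul_nonneg (pow_nonneg hb1 9) (pow_nonneg hb2 2)))) (mul_nonneg (show (0:ℝ) ≤ (-839171/500000 + -523441/200000 * α + 4651161/500000 * α ^ 2 + -87087/62500 * α ^ 3 + 7917/125000 * α ^ 4) by linarith) (mul_nonneg (pow_nonneg hb1 10) (pow_nonneg hb2 1)))) (mul_nonneg (show (0:ℝ) ≤ (-100813/500000 + -7917/62500 * α + 401187/500000 * α ^ 2 + -7917/62500 * α ^ 3) by linarith) (pow_nonneg hb1 1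1)))
          calc (1/250:ℝ) ≤ 1/250 + ((2788649/12800000 + -755473649/1024000000 * α + 344041299/512000000 * α ^ 2 + -25552661/512000000 * α ^ 3 + 6424303/256000000 * α ^ 4) * ((0) - 2*u) ^ 11 + (112042083/51200000 + -4174370837/512000000 * α + 2092496931/256000000 * α ^ 2 + -337204841/512000000 * α ^ 3 + 34468571/128000000 * α ^ 4) * ((2*u - (-1)) ^ 1 * ((0) - 2*u) ^ 10) + (2432027493/256000000 + -10302691449/256000000 * α + 2834872103/64000000 * α ^ 2 + -447643273/128000000 * α ^ 3 + 75105699/51200000 * α ^ 4) * ((2*u - (-1)) ^ 2 * ((0) - 2*u) ^ 9) + (2989899777/128000000 + -14999191049/128000000 * α + 281968431/2000000 * α ^ 2 + -1427101809/128000000 * α ^ 3 + 7770111/1600000 * α ^ 4) * ((2*u - (-1)) ^ 3 * ((0) - 2*u) ^ 8) + (1101351/31250 + -28621273213/128000000 * α + 1876922643/6400000 * α ^ 2 + -3176750961/128000000 * α ^ 3 + 163227327/16000000 * α ^ 4) * ((2*u - (-1)) ^ 4 * ((0) - 2*u) ^ 7) + (1018900919/32000000 + -9374674361/32000000 * α +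 13437838009/32000000 * α ^ 2 + -318560791/8000000 * α ^ 3 + 446525811/32000000 * α ^ 4) * ((2*u - (-1)) ^ 5 * ((0) - 2*u) ^ 6) + (104656213/8000000 + -1711714529/6400000 * α + 6777535237/16000000 * α ^ 2 + -1453761519/32000000 * α ^ 3 + 201710939/16000000 * α ^ 4) * ((2*u - (-1)) ^ 6 * ((0) - 2*u) ^ 5) + (-76568887/16000000 + -1349738309/8000000 * α + 96510413/320000 * α ^ 2 + -451269/12500 * α ^ 3 + 24003853/3200000 * α ^ 4) * ((2*u - (-1)) ^ 7 * ((0) - 2*u) ^ 4) + (-19488467/2000000 + -1138603/16000 * α + 297321301/2000000 * α ^ 2 + -973791/50000 * α ^ 3 + 71253/25000 * α ^ 4) * ((2*u - (-1)) ^ 8 * ((0) - 2*u) ^ 3) + (-2311893/400000 + -9344797/500000 * α + 19322763/400000 * α ^ 2 + -340431/50000 * α ^ 3 + 7917/12500 * α ^ 4) * ((2*u - (-1)) ^ 9 * ((0) - 2*u) ^ 2) + (-839171/500000 + -523441/200000 * α + 4651161/500000 * α ^ 2 + -87087/62500 * α ^ 3 + 7917/125000 * α ^ 4) * ((2*u -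 (-1)) ^ 10 * ((0) - 2*u) ^ 1) + (-100813/500000 + -7917/62500 * α + 401187/500000 * α ^ 2 + -7917/62500 * α ^ 3) * (2*u - (-1)) ^ 11) := le_add_of_nonneg_right hsum
            _ = _ := by ring

private lemma QQA_nn (α u : ℝ) (h3 : α ^ 3 = 1/4) (h4 : α ^ 4 = α/4) (hal : (62996/100000:ℝ) ≤ α) (hau : α ≤ (6299606/10000000:ℝ)) (hsql : (62996/100000:ℝ)^2 ≤ α^2) (hsqu : α^2 ≤ (6299606/10000000:ℝ)^2)
    (hu1 : -1 ≤ u) (hu2 : u ≤ 1) : 0 ≤ QQA α u := by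
  rcases le_total u 0 with hu0 | hu0
  · linarith [QQA_low α u h3 h4 hal hau hsql hsqu hu1 hu0]
  · unfold QQA
    rcases le_total u (1/2) with hxn0 | hxn0
    · have hb1 : (0:ℝ) ≤ 2*u - (0) := by linarith
      have hb2 : (0:ℝ) ≤ (1) - 2*u := by linarith
      have hsum : (0:ℝ) ≤ (-98813/500000 + -7917/62500 * α + 401187/500000 * α ^ 2 + -7917/62500 * α ^ 3) * ((1) - 2*u) ^ 11 + (-271343/100000 + -169579/1000000 * α + 4174953/500000 * α ^ 2 + -87087/62500 * α ^ 3 + -7917/125000 * α ^ 4) * ((2*u - (0)) ^ 1 * ((1) - 2*u) ^ 10) + (-1308049/80000 + 2893333/500000 * α + 15513099/400000 * α ^ 2 + -340431/50000 * α ^ 3 + -7917/12500 * α ^ 4) * ((2*u - (0)) ^ 2 * ((1) - 2*u) ^ 9) + (-115351423/2000000 + 77279711/2000000 * α + 211158809/2000000 * α ^ 2 + -973791/50000 * α ^ 3 + -71253/25000 * α ^ 4) * ((2*u - (0)) ^ 3 * ((1) - 2*u) ^ 8) + (-2131460151/16000000 + 978182523/8000000 * α + 1484199301/8000000 * α ^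 2 + -451269/12500 * α ^ 3 + -4927639/640000 * α ^ 4) * ((2*u - (0)) ^ 4 * ((1) - 2*u) ^ 7) + (-849870219/4000000 + 7594148429/32000000 * α + 3479662343/16000000 * α ^ 2 + -1440440337/32000000 * α ^ 3 + -223912909/16000000 * α ^ 4) * ((2*u - (0)) ^ 5 * ((1) - 2*u) ^ 6) + (-1531738333/6400000 + 1962366999/6400000 * α + 5382026961/32000000 * α ^ 2 + -149289509/4000000 * α ^ 3 + -575028333/32000000 * α ^ 4) * ((2*u - (0)) ^ 6 * ((1) - 2*u) ^ 5) + (-3047991917/16000000 + 34672353989/128000000 * α + 508812871/6400000 * α ^ 2 + -2416590559/128000000 * α ^ 3 + -65615983/4000000 * α ^ 4) * ((2*u - (0)) ^ 7 * ((1) - 2*u) ^ 4) + (-2684442323/25600000 + 20788379583/128000000 * α + 16659667/1000000 * α ^ 2 + -517849321/128000000 * α ^ 3 + -82782683/8000000 * α ^ 4) * ((2*u - (0)) ^ 8 * ((1) - 2*u) ^ 3) + (-9708215769/256000000 + 16190065277/256000000 * α + -38006571/12800000 * α ^ 2 + 123579323/128000000 * α ^ 3 + -1083722223/256000000 * α ^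 4) * ((2*u - (0)) ^ 9 * ((1) - 2*u) ^ 2) + (-2070240781/256000000 + 7372240771/512000000 * α + -613651661/256000000 * α ^ 2 + 73755723/102400000 * α ^ 3 + -1020159/1024000 * α ^ 4) * ((2*u - (0)) ^ 10 * ((1) - 2*u) ^ 1) + (-98254061/128000000 + 1483179117/1024000000 * α + -194619559/512000000 * α ^ 2 + 11520663/102400000 * α ^ 3 + -5182323/51200000 * α ^ 4) * (2*u - (0)) ^ 11 :=
        (add_nonneg (add_nonneg (add_nonneg (add_nonneg (add_nonneg (add_nonneg (add_nonneg (add_nonneg (add_nonneg (add_nonneg (add_nonneg (mul_nonneg (show (0:ℝ) ≤ (-98813/500000 + -7917/62500 * α + 401187/500000 * α ^ 2 + -7917/62500 * α ^ 3) by linarith) (pow_nonneg hb2 11)) (mul_nonneg (show (0:ℝ) ≤ (-271343/100000 + -169579/1000000 * α + 4174953/500000 * α ^ 2 + -87087/62500 * α ^ 3 + -7917/125000 * α ^ 4) by linarith) (mul_nonneg (pow_nonneg hb1 1) (pow_nonneg hb2 10)))) (mul_nonneg (show (0:ℝ) ≤ (-1308049/80000 + 2893333/500000 * α + 15513099/400000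 * α ^ 2 + -340431/50000 * α ^ 3 + -7917/12500 * α ^ 4) by linarith) (mul_nonneg (pow_nonneg hb1 2) (pow_nonneg hb2 9)))) (mul_nonneg (show (0:ℝ) ≤ (-115351423/2000000 + 77279711/2000000 * α + 211158809/2000000 * α ^ 2 + -973791/50000 * α ^ 3 + -71253/25000 * α ^ 4) by linarith) (mul_nonneg (pow_nonneg hb1 3) (pow_nonneg hb2 8)))) (mul_nonneg (show (0:ℝ) ≤ (-2131460151/16000000 + 978182523/8000000 * α + 1484199301/8000000 * α ^ 2 + -451269/12500 * α ^ 3 + -4927639/640000 * α ^ 4) by linarith) (mul_nonneg (pow_nonneg hb1 4) (pow_nonneg hb2 7)))) (mul_nonneg (show (0:ℝ) ≤ (-849870219/4000000 + 7594148429/32000000 * α + 3479662343/16000000 * α ^ 2 + -1440440337/32000000 * α ^ 3 + -223912909/16000000 * α ^ 4) by linarith) (mul_nonneg (pow_nonneg hb1 5) (pow_nonneg hb2 6)))) (mul_nonneg (show (0:ℝ) ≤ (-1531738333/6400000 + 1962366999/6400000 * α + 5382026961/32000000 * α ^ 2 + -149289509/4000000 * α ^ 3 + -575028333/32000000 * α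 ^ 4) by linarith) (mul_nonneg (pow_nonneg hb1 6) (pow_nonneg hb2 5)))) (mul_nonneg (show (0:ℝ) ≤ (-3047991917/16000000 + 34672353989/128000000 * α + 508812871/6400000 * α ^ 2 + -2416590559/128000000 * α ^ 3 + -65615983/4000000 * α ^ 4) by linarith) (mul_nonneg (pow_nonneg hb1 7) (pow_nonneg hb2 4)))) (mul_nonneg (show (0:ℝ) ≤ (-2684442323/25600000 + 20788379583/128000000 * α + 16659667/1000000 * α ^ 2 + -517849321/128000000 * α ^ 3 + -82782683/8000000 * α ^ 4) by linarith) (mul_nonneg (pow_nonneg hb1 8) (pow_nonneg hb2 3)))) (mul_nonneg (show (0:ℝ) ≤ (-9708215769/256000000 + 16190065277/256000000 * α + -38006571/12800000 * α ^ 2 + 123579323/128000000 * α ^ 3 + -1083722223/256000000 * α ^ 4) by linarith) (mul_nonneg (pow_nonneg hb1 9) (pow_nonneg hb2 2)))) (mul_nonneg (show (0:ℝ) ≤ (-2070240781/256000000 + 7372240771/512000000 * α + -613651661/256000000 * α ^ 2 + 73755723/102400000 * α ^ 3 + -1020159/1024000 * α ^ 4) by linarith) (mul_nonneg (pow_nonneg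 hb1 10) (pow_nonneg hb2 1)))) (mul_nonneg (show (0:ℝ) ≤ (-98254061/128000000 + 1483179117/1024000000 * α + -194619559/512000000 * α ^ 2 + 11520663/102400000 * α ^ 3 + -5182323/51200000 * α ^ 4) by linarith) (pow_nonneg hb1 11)))
      refine hsum.trans (le_of_eq ?_)
      ring
    · rcases le_total u (3/4) with hxn1 | hxn1
      · have hb1 : (0:ℝ) ≤ 4*u - (2) := by linarith
        have hb2 : (0:ℝ) ≤ (3) - 4*u := by linarith
        have hsum : (0:ℝ) ≤ (-98254061/128000000 + 1483179117/1024000000 * α + -194619559/512000000 * α ^ 2 + 11520663/102400000 * α ^ 3 + -5182323/51200000 * α ^ 4) * ((3) - 4*u) ^ 11 + (-882905449/102400000 + 34200429319/2048000000 * α + -41561137/8192000 * α ^ 2 + 76606539/51200000 * α ^ 3 + -120008709/102400000 * α ^ 4) * ((4*u - (2)) ^ 1 * ((3) - 4*u) ^ 10) + (-44872512729/1024000000 + 356599477763/4096000000 * α + -12207568977/409600000 * α ^ 2 + 17944599767/2048000000 * α ^ 3 + -1564694787/256000000 * α ^ 4) * ((4*u - (2)) ^ 2 * ((3) - 4*u)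 ^ 9) + (-136136784869/1024000000 + 2218267954977/8192000000 * α + -419549136119/4096000000 * α ^ 2 + 61342696709/2048000000 * α ^ 3 + -484457503/25600000 * α ^ 4) * ((4*u - (2)) ^ 3 * ((3) - 4*u) ^ 8) + (-34220174779/128000000 + 4570796076149/8192000000 * α + -941146083683/4096000000 * α ^ 2 + 272549936269/4096000000 * α ^ 3 + -15803700157/409600000 * α ^ 4) * ((4*u - (2)) ^ 4 * ((3) - 4*u) ^ 7) + (-1531339800283/4096000000 + 2618483142363/3276800000 * α + -2900744853849/8192000000 * α ^ 2 + 82659435233/819200000 * α ^ 3 + -44467732263/819200000 * α ^ 4) * ((4*u - (2)) ^ 5 * ((3) - 4*u) ^ 6) + (-3036113936979/8192000000 + 5314166899771/6553600000 * α + -251010795229/655360000 * α ^ 2 + 348908251353/3276800000 * α ^ 3 + -219736777099/4096000000 * α ^ 4) * ((4*u - (2)) ^ 6 * ((3) - 4*u) ^ 5) + (-532688068821/2048000000 + 7631715084657/13107200000 * α + -9532889851247/32768000000 * α ^ 2 + 159818388903/2048000000 * α ^ 3 + -304286362301/8192000000 * α ^ 4) * ((4*u - (2)) ^ 7 * ((3)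 - 4*u) ^ 4) + (-4142178250423/32768000000 + 15175593057509/52428800000 * α + -19928820244291/131072000000 * α ^ 2 + 5087016872739/131072000000 * α ^ 3 + -230745330219/13107200000 * α ^ 4) * ((4*u - (2)) ^ 8 * ((3) - 4*u) ^ 3) + (-5296288612501/131072000000 + 49631451928027/524288000000 * α + -13643029055793/262144000000 * α ^ 2 + 203654554089/16384000000 * α ^ 3 + -142148315253/26214400000 * α ^ 4) * ((4*u - (2)) ^ 9 * ((3) - 4*u) ^ 2) + (-399154450501/52428800000 + 19160685220319/1048576000000 * α + -220049379129/20971520000 * α ^ 2 + 1205757519231/524288000000 * α ^ 3 + -15967965261/16384000000 * α ^ 4) * ((4*u - (2)) ^ 10 * ((3) - 4*u) ^ 1) + (-33339526811/52428800000 + 3291506291973/2097152000000 * α + -989321065563/1048576000000 * α ^ 2 + 97667248011/524288000000 * α ^ 3 + -10154321469/131072000000 * α ^ 4) * (4*u - (2)) ^ 11 :=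
          (add_nonneg (add_nonneg (add_nonneg (add_nonneg (add_nonneg (add_nonneg (add_nonneg (add_nonneg (add_nonneg (add_nonneg (add_nonneg (mul_nonneg (show (0:ℝ) ≤ (-98254061/128000000 + 1483179117/1024000000 * α + -194619559/512000000 * α ^ 2 + 11520663/102400000 * α ^ 3 + -5182323/51200000 * α ^ 4) by linarith) (pow_nonneg hb2 11)) (mul_nonneg (show (0:ℝ) ≤ (-882905449/102400000 + 34200429319/2048000000 * α + -41561137/8192000 * α ^ 2 + 76606539/51200000 * α ^ 3 + -120008709/102400000 * α ^ 4) by linarith) (mul_nonneg (pow_nonneg hb1 1) (pow_nonneg hb2 10)))) (mul_nonneg (show (0:ℝ) ≤ (-44872512729/1024000000 + 356599477763/4096000000 * α + -12207568977/409600000 * α ^ 2 + 17944599767/2048000000 * α ^ 3 + -1564694787/256000000 * α ^ 4) by linarith) (mul_nonneg (pow_nonneg hb1 2) (pow_nonneg hb2 9)))) (mul_nonneg (show (0:ℝ) ≤ (-136136784869/1024000000 + 2218267954977/8192000000 * α + -419549136119/4096000000 * α ^ 2 + 61342696709/2048000000 * α ^ 3 + -484457503/25600000 * α ^ 4) by linarith)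 (mul_nonneg (pow_nonneg hb1 3) (pow_nonneg hb2 8)))) (mul_nonneg (show (0:ℝ) ≤ (-34220174779/128000000 + 4570796076149/8192000000 * α + -941146083683/4096000000 * α ^ 2 + 272549936269/4096000000 * α ^ 3 + -15803700157/409600000 * α ^ 4) by linarith) (mul_nonneg (pow_nonneg hb1 4) (pow_nonneg hb2 7)))) (mul_nonneg (show (0:ℝ) ≤ (-1531339800283/4096000000 + 2618483142363/3276800000 * α + -2900744853849/8192000000 * α ^ 2 + 82659435233/819200000 * α ^ 3 + -44467732263/819200000 * α ^ 4) by linarith) (mul_nonneg (pow_nonneg hb1 5) (pow_nonneg hb2 6)))) (mul_nonneg (show (0:ℝ) ≤ (-3036113936979/8192000000 + 5314166899771/6553600000 * α + -251010795229/655360000 * α ^ 2 + 348908251353/3276800000 * α ^ 3 + -219736777099/4096000000 * α ^ 4) by linarith) (mul_nonneg (pow_nonneg hb1 6) (pow_nonneg hb2 5)))) (mul_nonneg (show (0:ℝ) ≤ (-532688068821/2048000000 + 7631715084657/13107200000 * α + -9532889851247/32768000000 * α ^ 2 + 159818388903/2048000000 * α ^ 3 + -304286362301/8192000000 * α ^ 4)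 by linarith) (mul_nonneg (pow_nonneg hb1 7) (pow_nonneg hb2 4)))) (mul_nonneg (show (0:ℝ) ≤ (-4142178250423/32768000000 + 15175593057509/52428800000 * α + -19928820244291/131072000000 * α ^ 2 + 5087016872739/131072000000 * α ^ 3 + -230745330219/13107200000 * α ^ 4) by linarith) (mul_nonneg (pow_nonneg hb1 8) (pow_nonneg hb2 3)))) (mul_nonneg (show (0:ℝ) ≤ (-5296288612501/131072000000 + 49631451928027/524288000000 * α + -13643029055793/262144000000 * α ^ 2 + 203654554089/16384000000 * α ^ 3 + -142148315253/26214400000 * α ^ 4) by linarith) (mul_nonneg (pow_nonneg hb1 9) (pow_nonneg hb2 2)))) (mul_nonneg (show (0:ℝ) ≤ (-399154450501/52428800000 + 19160685220319/1048576000000 * α + -220049379129/20971520000 * α ^ 2 + 1205757519231/524288000000 * α ^ 3 + -15967965261/16384000000 * α ^ 4) by linarith) (mul_nonneg (pow_nonneg hb1 10) (pow_nonneg hb2 1)))) (mul_nonneg (show (0:ℝ) ≤ (-33339526811/52428800000 + 3291506291973/2097152000000 * α + -989321065563/1048576000000 * α ^ 2 + 97667248011/524288000000 * α ^ 3 + -10154321469/131072000000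 * α ^ 4) by linarith) (pow_nonneg hb1 11)))
        refine hsum.trans (le_of_eq ?_)
        ring
      · have hb1 : (0:ℝ) ≤ 4*u - (3) := by linarith
        have hb2 : (0:ℝ) ≤ (4) - 4*u := by linarith
        have hsum : (0:ℝ) ≤ (-33339526811/52428800000 + 3291506291973/2097152000000 * α + -989321065563/1048576000000 * α ^ 2 + 97667248011/524288000000 * α ^ 3 + -10154321469/131072000000 * α ^ 4) * ((4) - 4*u) ^ 11 + (-334315139341/52428800000 + 2130735498923/131072000000 * α + -672662155371/65536000000 * α ^ 2 + 942921937011/524288000000 * α ^ 3 + -9565135023/13107200000 * α ^ 4) * ((4*u - (3)) ^ 1 * ((4) - 4*u) ^ 10) + (-3675305833501/131072000000 + 4882180722919/65536000000 * α + -3260835719877/65536000000 * α ^ 2 + 486073738581/65536000000 * α ^ 3 + -77963571537/26214400000 * α ^ 4) * ((4*u - (3)) ^ 2 * ((4) - 4*u) ^ 9) + (-286419305443/4096000000 + 807387583217/4096000000 * α + -579402048613/4096000000 * α ^ 2 + 276292799289/16384000000 * α ^ 3 + -44786471691/6553600000 * α ^ 4) * ((4*u - (3)) ^ 3 * ((4)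 - 4*u) ^ 8) + (-430289415013/4096000000 + 5367568483499/16384000000 * α + -66844054709/256000000 * α ^ 2 + 373139499447/16384000000 * α ^ 3 + -39905002993/4096000000 * α ^ 4) * ((4*u - (3)) ^ 4 * ((4) - 4*u) ^ 7) + (-35788452529/409600000 + 1404333215989/4096000000 * α + -670280241583/2048000000 * α ^ 2 + 15523574583/819200000 * α ^ 3 + -18980001173/2048000000 * α ^ 4) * ((4*u - (3)) ^ 5 * ((4) - 4*u) ^ 6) + (-7181927749/512000000 + 20547198173/102400000 * α + -5803245023/20480000 * α ^ 2 + 800505673/64000000 * α ^ 3 + -227130453/32000000 * α ^ 4) * ((4*u - (3)) ^ 6 * ((4) - 4*u) ^ 5) + (14004474597/256000000 + 308947771/16000000 * α + -21723510543/128000000 * α ^ 2 + 1701658119/128000000 * α ^ 3 + -314347533/51200000 * α ^ 4) * ((4*u - (3)) ^ 7 * ((4) - 4*u) ^ 4) + (1082214027/16000000 + -4223977759/64000000 * α + -560776053/8000000 * α ^ 2 + 1049743887/64000000 * α ^ 3 + -1121991/200000 * α ^ 4) * ((4*u - (3)) ^ 8 * ((4) - 4*u) ^ 3) + (315311963/8000000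 + -846285063/16000000 * α + -16100477/800000 * α ^ 2 + 202958329/16000000 * α ^ 3 + -3687789/1000000 * α ^ 4) * ((4*u - (3)) ^ 9 * ((4) - 4*u) ^ 2) + (760103/62500 + -36427883/2000000 * α + -8110479/2000000 * α ^ 2 + 10336423/2000000 * α ^ 3 + -2746357/2000000 * α ^ 4) * ((4*u - (3)) ^ 10 * ((4) - 4*u) ^ 1) + (1603757/1000000 + -631211/250000 * α + -238959/500000 * α ^ 2 + 43267/50000 * α ^ 3 + -43267/200000 * α ^ 4) * (4*u - (3)) ^ 11 :=
          (add_nonneg (add_nonneg (add_nonneg (add_nonneg (add_nonneg (add_nonneg (add_nonneg (add_nonneg (add_nonneg (add_nonneg (add_nonneg (mul_nonneg (show (0:ℝ) ≤ (-33339526811/52428800000 + 3291506291973/2097152000000 * α + -989321065563/1048576000000 * α ^ 2 + 97667248011/524288000000 * α ^ 3 + -10154321469/131072000000 * α ^ 4) by linarith) (pow_nonneg hb2 11)) (mul_nonneg (show (0:ℝ) ≤ (-334315139341/52428800000 + 2130735498923/131072000000 * α + -672662155371/65536000000 * α ^ 2 + 942921937011/524288000000 * α ^ 3 + -9565135023/13107200000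 * α ^ 4) by linarith) (mul_nonneg (pow_nonneg hb1 1) (pow_nonneg hb2 10)))) (mul_nonneg (show (0:ℝ) ≤ (-3675305833501/131072000000 + 4882180722919/65536000000 * α + -3260835719877/65536000000 * α ^ 2 + 486073738581/65536000000 * α ^ 3 + -77963571537/26214400000 * α ^ 4) by linarith) (mul_nonneg (pow_nonneg hb1 2) (pow_nonneg hb2 9)))) (mul_nonneg (show (0:ℝ) ≤ (-286419305443/4096000000 + 807387583217/4096000000 * α + -579402048613/4096000000 * α ^ 2 + 276292799289/16384000000 * α ^ 3 + -44786471691/6553600000 * α ^ 4) by linarith) (mul_nonneg (pow_nonneg hb1 3) (pow_nonneg hb2 8)))) (mul_nonneg (show (0:ℝ) ≤ (-430289415013/4096000000 + 5367568483499/16384000000 * α + -66844054709/256000000 * α ^ 2 + 373139499447/16384000000 * α ^ 3 + -39905002993/4096000000 * α ^ 4) by linarith) (mul_nonneg (pow_nonneg hb1 4) (pow_nonneg hb2 7)))) (mul_nonneg (show (0:ℝ) ≤ (-35788452529/409600000 + 1404333215989/4096000000 * α + -670280241583/2048000000 * α ^ 2 + 15523574583/819200000 * α ^ 3 + -18980001173/2048000000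 * α ^ 4) by linarith) (mul_nonneg (pow_nonneg hb1 5) (pow_nonneg hb2 6)))) (mul_nonneg (show (0:ℝ) ≤ (-7181927749/512000000 + 20547198173/102400000 * α + -5803245023/20480000 * α ^ 2 + 800505673/64000000 * α ^ 3 + -227130453/32000000 * α ^ 4) by linarith) (mul_nonneg (pow_nonneg hb1 6) (pow_nonneg hb2 5)))) (mul_nonneg (show (0:ℝ) ≤ (14004474597/256000000 + 308947771/16000000 * α + -21723510543/128000000 * α ^ 2 + 1701658119/128000000 * α ^ 3 + -314347533/51200000 * α ^ 4) by linarith) (mul_nonneg (pow_nonneg hb1 7) (pow_nonneg hb2 4)))) (mul_nonneg (show (0:ℝ) ≤ (1082214027/16000000 + -4223977759/64000000 * α + -560776053/8000000 * α ^ 2 + 1049743887/64000000 * α ^ 3 + -1121991/200000 * α ^ 4) by linarith) (mul_nonneg (pow_nonneg hb1 8) (pow_nonneg hb2 3)))) (mul_nonneg (show (0:ℝ) ≤ (315311963/8000000 + -846285063/16000000 * α + -16100477/800000 * α ^ 2 + 202958329/16000000 * α ^ 3 + -3687789/1000000 * α ^ 4) by linarith) (mul_nonneg (pow_nonneg hb1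 9) (pow_nonneg hb2 2)))) (mul_nonneg (show (0:ℝ) ≤ (760103/62500 + -36427883/2000000 * α + -8110479/2000000 * α ^ 2 + 10336423/2000000 * α ^ 3 + -2746357/2000000 * α ^ 4) by linarith) (mul_nonneg (pow_nonneg hb1 10) (pow_nonneg hb2 1)))) (mul_nonneg (show (0:ℝ) ≤ (1603757/1000000 + -631211/250000 * α + -238959/500000 * α ^ 2 + 43267/50000 * α ^ 3 + -43267/200000 * α ^ 4) by linarith) (pow_nonneg hb1 11)))
        refine hsum.trans (le_of_eq ?_)
        ring

private noncomputable def QQB (α u : ℝ) : ℝ := (-541627/1000000 + 1994797/1000000 * α + -541627/1000000 * α ^ 2 + -5203/1000000 * α ^ 3) + (-5203/1000000 + 1291627/1000000 * α + -1 * α ^ 2 + 3/4 * α ^ 3 + -5203/1000000 * α ^ 4) * u + (541627/500000 + -194797/200000 * α + -208373/500000 * α ^ 2 + 5203/200000 * α ^ 3) * u ^ 2 + (-1624881/1000000 * α + -15609/500000 * α ^ 2) * u ^ 3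

private lemma QQB_low (α u : ℝ) (h3 : α ^ 3 = 1/4) (h4 : α ^ 4 = α/4) (hal : (62996/100000:ℝ) ≤ α) (hau : α ≤ (6299606/10000000:ℝ)) (hsql : (62996/100000:ℝ)^2 ≤ α^2) (hsqu : α^2 ≤ (6299606/10000000:ℝ)^2)
    (hu1 : -1 ≤ u) (hu2 : u ≤ 0) : (1/8:ℝ) ≤ QQB α u := by
  unfold QQB
  have hb1 : (0:ℝ) ≤ 1*u - (-1) := by linarith
  have hb2 : (0:ℝ) ≤ (0) - 1*u := by linarith
  have hsum : (0:ℝ) ≤ (42183/100000 + 677033/500000 * α + 14569/200000 * α ^ 2 + -182297/250000 * α ^ 3 + 5203/1000000 * α ^ 4) * ((0) - 1*u) ^ 4 + (-484391/1000000 + 1890609/500000 * α + 15609/500000 * α ^ 2 + -1109391/500000 * α ^ 3 + 15609/1000000 * α ^ 4) * ((1*u - (-1)) ^ 1 * ((0) - 1*u) ^ 3) + (-2900899/1000000 + 1779979/250000 * α + -166627/250000 * α ^ 2 + -2255203/1000000 * α ^ 3 + 15609/1000000 * α ^ 4) * ((1*u - (-1)) ^ 2 * ((0) - 1*u) ^ 2)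 + (-532261/200000 + 6687561/1000000 * α + -291627/250000 * α ^ 2 + -192703/250000 * α ^ 3 + 5203/1000000 * α ^ 4) * ((1*u - (-1)) ^ 3 * ((0) - 1*u) ^ 1) + (-666627/1000000 + 1994797/1000000 * α + -541627/1000000 * α ^ 2 + -5203/1000000 * α ^ 3) * (1*u - (-1)) ^ 4 :=
    (add_nonneg (add_nonneg (add_nonneg (add_nonneg (mul_nonneg (show (0:ℝ) ≤ (42183/100000 + 677033/500000 * α + 14569/200000 * α ^ 2 + -182297/250000 * α ^ 3 + 5203/1000000 * α ^ 4) by linarith) (pow_nonneg hb2 4)) (mul_nonneg (show (0:ℝ) ≤ (-484391/1000000 + 1890609/500000 * α + 15609/500000 * α ^ 2 + -1109391/500000 * α ^ 3 + 15609/1000000 * α ^ 4) by linarith) (mul_nonneg (pow_nonneg hb1 1) (pow_nonneg hb2 3)))) (mul_nonneg (show (0:ℝ) ≤ (-2900899/1000000 + 1779979/250000 * α + -166627/250000 * α ^ 2 + -2255203/1000000 * α ^ 3 + 15609/1000000 * α ^ 4) by linarith) (mul_nonneg (pow_nonneg hb1 2) (pow_nonneg hb2 2)))) (mul_nonneg (show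 (0:ℝ) ≤ (-532261/200000 + 6687561/1000000 * α + -291627/250000 * α ^ 2 + -192703/250000 * α ^ 3 + 5203/1000000 * α ^ 4) by linarith) (mul_nonneg (pow_nonneg hb1 3) (pow_nonneg hb2 1)))) (mul_nonneg (show (0:ℝ) ≤ (-666627/1000000 + 1994797/1000000 * α + -541627/1000000 * α ^ 2 + -5203/1000000 * α ^ 3) by linarith) (pow_nonneg hb1 4)))
  calc (1/8:ℝ) ≤ 1/8 + ((42183/100000 + 677033/500000 * α + 14569/200000 * α ^ 2 + -182297/250000 * α ^ 3 + 5203/1000000 * α ^ 4) * ((0) - 1*u) ^ 4 + (-484391/1000000 + 1890609/500000 * α + 15609/500000 * α ^ 2 + -1109391/500000 * α ^ 3 + 15609/1000000 * α ^ 4) * ((1*u - (-1)) ^ 1 * ((0) - 1*u) ^ 3) + (-2900899/1000000 + 1779979/250000 * α + -166627/250000 * α ^ 2 + -2255203/1000000 * α ^ 3 + 15609/1000000 * α ^ 4) * ((1*u - (-1)) ^ 2 * ((0) - 1*u) ^ 2) + (-532261/200000 + 6687561/1000000 * α + -291627/250000 * α ^ 2 + -192703/250000 * α ^ 3 + 5203/1000000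 * α ^ 4) * ((1*u - (-1)) ^ 3 * ((0) - 1*u) ^ 1) + (-666627/1000000 + 1994797/1000000 * α + -541627/1000000 * α ^ 2 + -5203/1000000 * α ^ 3) * (1*u - (-1)) ^ 4) := le_add_of_nonneg_right hsum
    _ = _ := by ring

private lemma QQB_nn (α u : ℝ) (h3 : α ^ 3 = 1/4) (h4 : α ^ 4 = α/4) (hal : (62996/100000:ℝ) ≤ α) (hau : α ≤ (6299606/10000000:ℝ)) (hsql : (62996/100000:ℝ)^2 ≤ α^2) (hsqu : α^2 ≤ (6299606/10000000:ℝ)^2)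
    (hu1 : -1 ≤ u) (hu2 : u ≤ 1) : 0 ≤ QQB α u := by
  rcases le_total u 0 with hu0 | hu0
  · linarith [QQB_low α u h3 h4 hal hau hsql hsqu hu1 hu0]
  · unfold QQB
    have hb1 : (0:ℝ) ≤ 1*u - (0) := by linarith
    have hb2 : (0:ℝ) ≤ (1) - 1*u := by linarith
    have hsum : (0:ℝ) ≤ (-541627/1000000 + 1994797/1000000 * α + -541627/1000000 * α ^ 2 + -5203/1000000 * α ^ 3) * ((1) - 1*u) ^ 4 + (-2171711/1000000 + 1854163/200000 * α + -791627/250000 * α ^ 2 + 182297/250000 * α ^ 3 + -5203/1000000 * α ^ 4) * ((1*u - (0)) ^ 1 * ((1) - 1*u) ^ 3) + (-2182117/1000000 + 7434839/500000 * α + -1666627/250000 * α ^ 2 + 2244797/1000000 * α ^ 3 + -15609/1000000 * α ^ 4) * ((1*u - (0)) ^ 2 * ((1) - 1*u) ^ 2) + (-15609/1000000 + 4140609/500000 * α + -3015609/500000 * α ^ 2 + 1140609/500000 * α ^ 3 + -15609/1000000 * α ^ 4) * ((1*u - (0)) ^ 3 * ((1) - 1*u) ^ 1) + (67053/125000 +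 343779/500000 * α + -1989591/1000000 * α ^ 2 + 192703/250000 * α ^ 3 + -5203/1000000 * α ^ 4) * (1*u - (0)) ^ 4 :=
      (add_nonneg (add_nonneg (add_nonneg (add_nonneg (mul_nonneg (show (0:ℝ) ≤ (-541627/1000000 + 1994797/1000000 * α + -541627/1000000 * α ^ 2 + -5203/1000000 * α ^ 3) by linarith) (pow_nonneg hb2 4)) (mul_nonneg (show (0:ℝ) ≤ (-2171711/1000000 + 1854163/200000 * α + -791627/250000 * α ^ 2 + 182297/250000 * α ^ 3 + -5203/1000000 * α ^ 4) by linarith) (mul_nonneg (pow_nonneg hb1 1) (pow_nonneg hb2 3)))) (mul_nonneg (show (0:ℝ) ≤ (-2182117/1000000 + 7434839/500000 * α + -1666627/250000 * α ^ 2 + 2244797/1000000 * α ^ 3 + -15609/1000000 * α ^ 4) by linarith) (mul_nonneg (pow_nonneg hb1 2) (pow_nonneg hb2 2)))) (mul_nonneg (show (0:ℝ) ≤ (-15609/1000000 + 4140609/500000 * α + -3015609/500000 * α ^ 2 + 1140609/500000 * α ^ 3 + -15609/1000000 * α ^ 4) by linarith) (mul_nonneg (pow_nonneg hb1 3) (pow_nonneg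 hb2 1)))) (mul_nonneg (show (0:ℝ) ≤ (67053/125000 + 343779/500000 * α + -1989591/1000000 * α ^ 2 + 192703/250000 * α ^ 3 + -5203/1000000 * α ^ 4) by linarith) (pow_nonneg hb1 4)))
    refine hsum.trans (le_of_eq ?_)
    ring

private lemma abar_pos (α : ℝ) (hpos : 0 < α) (h3 : α ^ 3 = 1/4) : 0 < Abar α := by
  have h4 : α ^ 4 = α/4 := by linear_combination α * h3
  have hal : (62996/100000:ℝ) ≤ α := by nlinarith [h3, hpos, sq_nonneg (α + 62996/100000), sq_nonneg (α - 62996/100000)]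
  have hau : α ≤ (6299606/10000000:ℝ) := by nlinarith [h3, hpos, sq_nonneg (α + 6299606/10000000), sq_nonneg (α - 6299606/10000000)]
  have hsql : (62996/100000:ℝ)^2 ≤ α^2 := by nlinarith [hal, hpos]
  have hsqu : α^2 ≤ (6299606/10000000:ℝ)^2 := by nlinarith [hau, hpos, hal]
  have hw : ∀ θ : ℝ, 0 < 1 - 2 * α * Real.cos θ + α ^ 2 := by
    intro θ
    have h1 : 0 ≤ 2*α*(1 - Real.cos θ) := mul_nonneg (by positivity) (by linarith [Real.cos_le_one θ])
    nlinarith [h1, mul_pos (show (0:ℝ) < 1 - α by linarith) (show (0:ℝ) < 1 - α by linarith)]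
  have hwc : Continuous (fun t : ℝ => 1 - 2 * α * Real.cos t + α ^ 2) := by fun_prop
  have hW3c : Continuous (fun t : ℝ => (1 - 2 * α * Real.cos t + α ^ 2) ^ (-(3 / 2) : ℝ)) := hwc.rpow_const fun t => Or.inl (hw t).ne'
  have hsp : ∀ θ : ℝ, (1 - 2 * α * Real.cos θ + α ^ 2) ^ (-(1 / 2) : ℝ)
      = (1 - 2 * α * Real.cos θ + α ^ 2) * (1 - 2 * α * Real.cos θ + α ^ 2) ^ (-(3 / 2) : ℝ) := by
    intro θ
    rw [show (-(1/2) : ℝ) = 1 + -(3/2) by norm_num, Real.rpow_add (hw θ), Real.rpow_one]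
  have hFI : IntervalIntegrable (fun θ : ℝ => ((α ^ 2) + (9/4 * α) * Real.cos θ + (-2 * α ^ 2) * Real.cos θ ^ 2 + (-2 * α) * Real.cos θ ^ 3) * (1 - 2 * α * Real.cos θ + α ^ 2) ^ (-(3 / 2) : ℝ)) MeasureTheory.volume 0 (2*π) :=
    (Continuous.mul (by fun_prop) hW3c).intervalIntegrable _ _
  have hQc : Continuous (fun θ : ℝ => QQA α (Real.cos θ)) := by unfold QQA; fun_prop
  have hGI : ∀ a b : ℝ, IntervalIntegrable (fun θ : ℝ => QQA α (Real.cos θ) * (1 - 2 * α * Real.cos θ + α ^ 2) ^ (-(3 / 2) : ℝ)) MeasureTheory.volume a b :=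
    fun a b => (hQc.mul hW3c).intervalIntegrable _ _
  have hkey : ∀ θ : ℝ, HasDerivAt (fun t : ℝ => Real.sin t * ((7917/62500 + 7917/62500 * α ^ 2) + Real.cos t * ((-98813/500000 + -7917/31250 * α) + Real.cos t * ((-29763/62500) + Real.cos t * ((-123037/500000) + Real.cos t * ((-194837/500000) + Real.cos t * ((-317171/1000000 + -317171/1000000 * α ^ 2) + Real.cos t * ((-247/250000 + 317171/500000 * α + -247/250000 * α ^ 2) + Real.cos t * ((6264/15625 + 247/125000 * α + 6264/15625 * α ^ 2) + Real.cos t * ((3463/500000 + -12528/15625 * α + 3463/500000 * α ^ 2) + Real.cos t * ((-51051/100000 + -3463/250000 * α))))))))))) * (1 - 2 * α * Real.cos t + α ^ 2) ^ (-(1 / 2) : ℝ))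
      (((α ^ 2) + (9/4 * α) * Real.cos θ + (-2 * α ^ 2) * Real.cos θ ^ 2 + (-2 * α) * Real.cos θ ^ 3) * (1 - 2 * α * Real.cos θ + α ^ 2) ^ (-(3 / 2) : ℝ) - QQA α (Real.cos θ) * (1 - 2 * α * Real.cos θ + α ^ 2) ^ (-(3 / 2) : ℝ)) θ := by
    intro θ
    have hc := Real.hasDerivAt_cos θ
    have hN := ((hc.mul ((hc.mul ((hc.mul ((hc.mul ((hc.mul ((hc.mul ((hc.mul ((hc.mul ((hc.mul (hasDerivAt_const θ ((-51051/100000 + -3463/250000 * α) : ℝ))).const_add ((3463/500000 + -12528/15625 * α + 3463/500000 * α ^ 2)))).const_add ((6264/15625 + 247/125000 * α + 6264/15625 * α ^ 2)))).const_add ((-247/250000 + 317171/500000 * α + -247/250000 * α ^ 2)))).const_add ((-317171/1000000 + -317171/1000000 * α ^ 2)))).const_add ((-194837/500000)))).const_add ((-123037/500000)))).const_add ((-29763/62500)))).const_add ((-98813/500000 + -7917/31250 * α)))).const_add ((7917/62500 + 7917/62500 * α ^ 2)))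
    have hwd : HasDerivAt (fun t : ℝ => 1 - 2 * α * Real.cos t + α ^ 2) (2*α*Real.sin θ) θ := by
      convert ((hc.const_mul (2*α)).const_sub 1).add_const (α^2) using 1
      · rfl
      · rfl
      ring
    have hW := hwd.rpow_const (p := (-(1/2) : ℝ)) (Or.inl (hw θ).ne')
    rw [show (-(1/2) : ℝ) - 1 = -(3/2) by norm_num] at hW
    unfold QQA
    convert ((Real.hasDerivAt_sin θ).mul hN).mul hW using 1
    · rfl
    · rfl
    · rfl
    rw [hsp θ]
    simp only [Pi.mul_apply]
    linear_combination (((-98813/500000 + -7917/62500 * α + -98813/500000 * α ^ 2 + -7917/62500 * α ^ 3) + (-29763/31250 + 98813/500000 * α + -10923/15625 * α ^ 2) * Real.cos θ + (-369111/500000 + 89289/62500 * α + -369111/500000 * α ^ 2) * Real.cos θ ^ 2 + (-194837/125000 + 123037/100000 * α + -194837/125000 * α ^ 2) * Real.cos θ ^ 3 + (-317171/200000 + 1363859/500000 * α + -317171/100000 * α ^ 2 + -317171/200000 * α ^ 4) * Real.cos θ ^ 4 + (-741/125000 + 6660591/1000000 * α + -741/62500 * α ^ 2 + 6660591/1000000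 * α ^ 3 + -741/125000 * α ^ 4) * Real.cos θ ^ 5 + (43848/15625 + 247/10000 * α + -682609/500000 * α ^ 2 + 247/10000 * α ^ 3 + 43848/15625 * α ^ 4) * Real.cos θ ^ 6 + (3463/62500 + -181656/15625 * α + 10641/125000 * α ^ 2 + -181656/15625 * α ^ 3 + 3463/62500 * α ^ 4) * Real.cos θ ^ 7 + (-459459/100000 + -114279/500000 * α + 743229/100000 * α ^ 2 + -114279/500000 * α ^ 3) * Real.cos θ ^ 8 + (867867/100000 * α + 58871/250000 * α ^ 2) * Real.cos θ ^ 9) * (1 - 2 * α * Real.cos θ + α ^ 2) ^ (-(3 / 2) : ℝ)) * Real.sin_sq_add_cos_sq θ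
  have hFTC := intervalIntegral.integral_eq_sub_of_hasDerivAt (a := 0) (b := 2*π)
      (f' := fun θ : ℝ => ((α ^ 2) + (9/4 * α) * Real.cos θ + (-2 * α ^ 2) * Real.cos θ ^ 2 + (-2 * α) * Real.cos θ ^ 3) * (1 - 2 * α * Real.cos θ + α ^ 2) ^ (-(3 / 2) : ℝ) - QQA α (Real.cos θ) * (1 - 2 * α * Real.cos θ + α ^ 2) ^ (-(3 / 2) : ℝ)) (fun θ _ => hkey θ)
      (((Continuous.mul (by fun_prop) hW3c).sub (hQc.mul hW3c)).intervalIntegrable _ _)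
  simp only [Real.sin_two_pi, Real.sin_zero, zero_mul, mul_zero, sub_zero, sub_self] at hFTC
  rw [intervalIntegral.integral_sub hFI (hGI 0 (2*π))] at hFTC
  have hGnn : ∀ θ : ℝ, 0 ≤ QQA α (Real.cos θ) * (1 - 2 * α * Real.cos θ + α ^ 2) ^ (-(3 / 2) : ℝ) := fun θ =>
    mul_nonneg (QQA_nn α _ h3 h4 hal hau hsql hsqu (Real.neg_one_le_cos θ) (Real.cos_le_one θ)) (Real.rpow_nonneg (hw θ).le _)
  have hGpos : 0 < ∫ θ in (π/2)..(π + π/2), QQA α (Real.cos θ) * (1 - 2 * α * Real.cos θ + α ^ 2) ^ (-(3 / 2) : ℝ) := by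
    apply intervalIntegral.intervalIntegral_pos_of_pos_on (hGI _ _)
    · intro θ hθ
      have hc1 : Real.cos θ ≤ 0 := Real.cos_nonpos_of_pi_div_two_le_of_le hθ.1.le hθ.2.le
      exact mul_pos (lt_of_lt_of_le (by norm_num) (QQA_low α _ h3 h4 hal hau hsql hsqu (Real.neg_one_le_cos θ) hc1)) (Real.rpow_pos_of_pos (hw θ) _)
    · linarith [Real.pi_pos]
  have hadd1 := intervalIntegral.integral_add_adjacent_intervals (hGI 0 (π/2)) (hGI (π/2) (π + π/2))
  have hadd2 := intervalIntegral.integral_add_adjacent_intervals (hGI 0 (π + π/2)) (hGI (π + π/2) (2*π))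
  have hnn1 : 0 ≤ ∫ θ in (0:ℝ)..(π/2), QQA α (Real.cos θ) * (1 - 2 * α * Real.cos θ + α ^ 2) ^ (-(3 / 2) : ℝ) :=
    intervalIntegral.integral_nonneg (by positivity) fun u _ => hGnn u
  have hnn2 : 0 ≤ ∫ θ in (π + π/2)..(2*π), QQA α (Real.cos θ) * (1 - 2 * α * Real.cos θ + α ^ 2) ^ (-(3 / 2) : ℝ) :=
    intervalIntegral.integral_nonneg (by linarith [Real.pi_pos]) fun u _ => hGnn u
  have hFpos : 0 < ∫ θ in (0:ℝ)..(2*π), ((α ^ 2) + (9/4 * α) * Real.cos θ + (-2 * α ^ 2) * Real.cos θ ^ 2 + (-2 * α) * Real.cos θ ^ 3) * (1 - 2 * α * Real.cos θ + α ^ 2) ^ (-(3 / 2) : ℝ) := by linarith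
  have hI1 : IntervalIntegrable (fun θ : ℝ => Real.cos (((1:ℤ):ℝ) * θ) * (1 - 2 * α * Real.cos θ + α ^ 2) ^ (-(3 / 2) : ℝ)) MeasureTheory.volume 0 (2*π) := (Continuous.mul (by fun_prop) hW3c).intervalIntegrable _ _
  have hI3 : IntervalIntegrable (fun θ : ℝ => Real.cos (((3:ℤ):ℝ) * θ) * (1 - 2 * α * Real.cos θ + α ^ 2) ^ (-(3 / 2) : ℝ)) MeasureTheory.volume 0 (2*π) := (Continuous.mul (by fun_prop) hW3c).intervalIntegrable _ _
  have hI2 : IntervalIntegrable (fun θ : ℝ => Real.cos (((2:ℤ):ℝ) * θ) * (1 - 2 * α * Real.cos θ + α ^ 2) ^ (-(3 / 2) : ℝ)) MeasureTheory.volume 0 (2*π) := (Continuous.mul (by fun_prop) hW3c).intervalIntegrable _ _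
  have hin : (∫ θ in (0:ℝ)..(2 * π), (3 / 4 * α * (Real.cos (((1:ℤ):ℝ) * θ) * (1 - 2 * α * Real.cos θ + α ^ 2) ^ (-(3 / 2) : ℝ)) -
      (1 / 2 * α * (Real.cos (((3:ℤ):ℝ) * θ) * (1 - 2 * α * Real.cos θ + α ^ 2) ^ (-(3 / 2) : ℝ)) + α ^ 2 * (Real.cos (((2:ℤ):ℝ) * θ) * (1 - 2 * α * Real.cos θ + α ^ 2) ^ (-(3 / 2) : ℝ)))))
      = 3 / 4 * α * (∫ θ in (0:ℝ)..(2 * π), Real.cos (((1:ℤ):ℝ) * θ) * (1 - 2 * α * Real.cos θ + α ^ 2) ^ (-(3 / 2) : ℝ)) - (1 / 2 * α * (∫ θ in (0:ℝ)..(2 * π), Real.cos (((3:ℤ):ℝ) * θ) * (1 - 2 * α * Real.cos θ + α ^ 2) ^ (-(3 / 2) : ℝ)) + α ^ 2 * (∫ θ in (0:ℝ)..(2 * π), Real.cos (((2:ℤ):ℝ) * θ) * (1 - 2 * α * Real.cos θ + α ^ 2) ^ (-(3 / 2) : ℝ))) := by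
    rw [intervalIntegral.integral_sub (hI1.const_mul _) ((hI3.const_mul _).add (hI2.const_mul _)),
      intervalIntegral.integral_add (hI3.const_mul _) (hI2.const_mul _),
      intervalIntegral.integral_const_mul, intervalIntegral.integral_const_mul, intervalIntegral.integral_const_mul]
  have habar : Abar α = 1/π * ∫ θ in (0:ℝ)..(2*π), ((α ^ 2) + (9/4 * α) * Real.cos θ + (-2 * α ^ 2) * Real.cos θ ^ 2 + (-2 * α) * Real.cos θ ^ 3) * (1 - 2 * α * Real.cos θ + α ^ 2) ^ (-(3 / 2) : ℝ) := by
    unfold Abar laplaceCoeff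
    rw [show ∀ X Y Z : ℝ, 3 / 4 * α * (1 / π * X) - 1 / 2 * α * (1 / π * Y) - α ^ 2 * (1 / π * Z)
        = 1 / π * (3 / 4 * α * X - (1 / 2 * α * Y + α ^ 2 * Z)) from fun X Y Z => by ring]
    congr 1
    rw [← hin]
    apply intervalIntegral.integral_congr
    intro θ _
    push_cast
    rw [Real.cos_two_mul, Real.cos_three_mul]
    ring
  rw [habar]
  exact mul_pos (by positivity) hFpos

private lemma bbar_pos (α : ℝ) (hpos : 0 < α) (h3 : α ^ 3 = 1/4) : 0 < Bbar α := by
  have h4 : α ^ 4 = α/4 := by linear_combination α * h3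
  have hal : (62996/100000:ℝ) ≤ α := by nlinarith [h3, hpos, sq_nonneg (α + 62996/100000), sq_nonneg (α - 62996/100000)]
  have hau : α ≤ (6299606/10000000:ℝ) := by nlinarith [h3, hpos, sq_nonneg (α + 6299606/10000000), sq_nonneg (α - 6299606/10000000)]
  have hsql : (62996/100000:ℝ)^2 ≤ α^2 := by nlinarith [hal, hpos]
  have hsqu : α^2 ≤ (6299606/10000000:ℝ)^2 := by nlinarith [hau, hpos, hal]
  have hw : ∀ θ : ℝ, 0 < 1 - 2 * α * Real.cos θ + α ^ 2 := by
    intro θ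
    have h1 : 0 ≤ 2*α*(1 - Real.cos θ) := mul_nonneg (by positivity) (by linarith [Real.cos_le_one θ])
    nlinarith [h1, mul_pos (show (0:ℝ) < 1 - α by linarith) (show (0:ℝ) < 1 - α by linarith)]
  have hwc : Continuous (fun t : ℝ => 1 - 2 * α * Real.cos t + α ^ 2) := by fun_prop
  have hW3c : Continuous (fun t : ℝ => (1 - 2 * α * Real.cos t + α ^ 2) ^ (-(3 / 2) : ℝ)) := hwc.rpow_const fun t => Or.inl (hw t).ne'
  have hW1c : Continuous (fun t : ℝ => (1 - 2 * α * Real.cos t + α ^ 2) ^ (-(1 / 2) : ℝ)) := hwc.rpow_const fun t => Or.inl (hw t).ne'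
  have hsp : ∀ θ : ℝ, (1 - 2 * α * Real.cos θ + α ^ 2) ^ (-(1 / 2) : ℝ)
      = (1 - 2 * α * Real.cos θ + α ^ 2) * (1 - 2 * α * Real.cos θ + α ^ 2) ^ (-(3 / 2) : ℝ) := by
    intro θ
    rw [show (-(1/2) : ℝ) = 1 + -(3/2) by norm_num, Real.rpow_add (hw θ), Real.rpow_one]
  have hFI : IntervalIntegrable (fun θ : ℝ => ((2 * α) + (3/4 * α + -1 * α ^ 2 + 3/4 * α ^ 3) * Real.cos θ + (-1 * α + -3/2 * α ^ 2) * Real.cos θ ^ 2) * (1 - 2 * α * Real.cos θ + α ^ 2) ^ (-(3 / 2) : ℝ)) MeasureTheory.volume 0 (2*π) :=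
    (Continuous.mul (by fun_prop) hW3c).intervalIntegrable _ _
  have hQc : Continuous (fun θ : ℝ => QQB α (Real.cos θ)) := by unfold QQB; fun_prop
  have hGI : ∀ a b : ℝ, IntervalIntegrable (fun θ : ℝ => QQB α (Real.cos θ) * (1 - 2 * α * Real.cos θ + α ^ 2) ^ (-(3 / 2) : ℝ)) MeasureTheory.volume a b :=
    fun a b => (hQc.mul hW3c).intervalIntegrable _ _
  have hkey : ∀ θ : ℝ, HasDerivAt (fun t : ℝ => Real.sin t * ((5203/1000000 + 5203/1000000 * α ^ 2) + Real.cos t * ((-541627/1000000 + -5203/500000 * α))) * (1 - 2 * α * Real.cos t + α ^ 2) ^ (-(1 / 2) : ℝ))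
      (((2 * α) + (3/4 * α + -1 * α ^ 2 + 3/4 * α ^ 3) * Real.cos θ + (-1 * α + -3/2 * α ^ 2) * Real.cos θ ^ 2) * (1 - 2 * α * Real.cos θ + α ^ 2) ^ (-(3 / 2) : ℝ) - QQB α (Real.cos θ) * (1 - 2 * α * Real.cos θ + α ^ 2) ^ (-(3 / 2) : ℝ)) θ := by
    intro θ
    have hc := Real.hasDerivAt_cos θ
    have hN := ((hc.mul (hasDerivAt_const θ ((-541627/1000000 + -5203/500000 * α) : ℝ))).const_add ((5203/1000000 + 5203/1000000 * α ^ 2)))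
    have hwd : HasDerivAt (fun t : ℝ => 1 - 2 * α * Real.cos t + α ^ 2) (2*α*Real.sin θ) θ := by
      convert ((hc.const_mul (2*α)).const_sub 1).add_const (α^2) using 1
      · rfl
      · rfl
      ring
    have hW := hwd.rpow_const (p := (-(1/2) : ℝ)) (Or.inl (hw θ).ne')
    rw [show (-(1/2) : ℝ) - 1 = -(3/2) by norm_num] at hW
    unfold QQB
    convert ((Real.hasDerivAt_sin θ).mul hN).mul hW using 1
    · rfl
    · rfl
    · rfl
    rw [hsp θ]
    simp only [Pi.mul_apply]
    linear_combination (((-541627/1000000 + -5203/1000000 * α + -541627/1000000 * α ^ 2 + -5203/1000000 * α ^ 3) + (541627/1000000 * α + 5203/500000 * α ^ 2) * Real.cos θ) * (1 - 2 * α * Real.cos θ + α ^ 2) ^ (-(3 / 2) : ℝ)) * Real.sin_sq_add_cos_sq θ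
  have hFTC := intervalIntegral.integral_eq_sub_of_hasDerivAt (a := 0) (b := 2*π)
      (f' := fun θ : ℝ => ((2 * α) + (3/4 * α + -1 * α ^ 2 + 3/4 * α ^ 3) * Real.cos θ + (-1 * α + -3/2 * α ^ 2) * Real.cos θ ^ 2) * (1 - 2 * α * Real.cos θ + α ^ 2) ^ (-(3 / 2) : ℝ) - QQB α (Real.cos θ) * (1 - 2 * α * Real.cos θ + α ^ 2) ^ (-(3 / 2) : ℝ)) (fun θ _ => hkey θ)
      (((Continuous.mul (by fun_prop) hW3c).sub (hQc.mul hW3c)).intervalIntegrable _ _)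
  simp only [Real.sin_two_pi, Real.sin_zero, zero_mul, mul_zero, sub_zero, sub_self] at hFTC
  rw [intervalIntegral.integral_sub hFI (hGI 0 (2*π))] at hFTC
  have hGnn : ∀ θ : ℝ, 0 ≤ QQB α (Real.cos θ) * (1 - 2 * α * Real.cos θ + α ^ 2) ^ (-(3 / 2) : ℝ) := fun θ =>
    mul_nonneg (QQB_nn α _ h3 h4 hal hau hsql hsqu (Real.neg_one_le_cos θ) (Real.cos_le_one θ)) (Real.rpow_nonneg (hw θ).le _)
  have hGpos : 0 < ∫ θ in (π/2)..(π + π/2), QQB α (Real.cos θ) * (1 - 2 * α * Real.cos θ + α ^ 2) ^ (-(3 / 2) : ℝ) := by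
    apply intervalIntegral.intervalIntegral_pos_of_pos_on (hGI _ _)
    · intro θ hθ
      have hc1 : Real.cos θ ≤ 0 := Real.cos_nonpos_of_pi_div_two_le_of_le hθ.1.le hθ.2.le
      exact mul_pos (lt_of_lt_of_le (by norm_num) (QQB_low α _ h3 h4 hal hau hsql hsqu (Real.neg_one_le_cos θ) hc1)) (Real.rpow_pos_of_pos (hw θ) _)
    · linarith [Real.pi_pos]
  have hadd1 := intervalIntegral.integral_add_adjacent_intervals (hGI 0 (π/2)) (hGI (π/2) (π + π/2))
  have hadd2 := intervalIntegral.integral_add_adjacent_intervals (hGI 0 (π + π/2)) (hGI (π + π/2) (2*π))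
  have hnn1 : 0 ≤ ∫ θ in (0:ℝ)..(π/2), QQB α (Real.cos θ) * (1 - 2 * α * Real.cos θ + α ^ 2) ^ (-(3 / 2) : ℝ) :=
    intervalIntegral.integral_nonneg (by positivity) fun u _ => hGnn u
  have hnn2 : 0 ≤ ∫ θ in (π + π/2)..(2*π), QQB α (Real.cos θ) * (1 - 2 * α * Real.cos θ + α ^ 2) ^ (-(3 / 2) : ℝ) :=
    intervalIntegral.integral_nonneg (by linarith [Real.pi_pos]) fun u _ => hGnn u
  have hFpos : 0 < ∫ θ in (0:ℝ)..(2*π), ((2 * α) + (3/4 * α + -1 * α ^ 2 + 3/4 * α ^ 3) * Real.cos θ + (-1 * α + -3/2 * α ^ 2) * Real.cos θ ^ 2) * (1 - 2 * α * Real.cos θ + α ^ 2) ^ (-(3 / 2) : ℝ) := by linarith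
  have hI1p : IntervalIntegrable (fun θ : ℝ => Real.cos (((1:ℤ):ℝ) * θ) * (1 - 2 * α * Real.cos θ + α ^ 2) ^ (-(1 / 2) : ℝ)) MeasureTheory.volume 0 (2*π) := (Continuous.mul (by fun_prop) hW1c).intervalIntegrable _ _
  have hI0 : IntervalIntegrable (fun θ : ℝ => Real.cos (((0:ℤ):ℝ) * θ) * (1 - 2 * α * Real.cos θ + α ^ 2) ^ (-(3 / 2) : ℝ)) MeasureTheory.volume 0 (2*π) := (Continuous.mul (by fun_prop) hW3c).intervalIntegrable _ _
  have hI1 : IntervalIntegrable (fun θ : ℝ => Real.cos (((1:ℤ):ℝ) * θ) * (1 - 2 * α * Real.cos θ + α ^ 2) ^ (-(3 / 2) : ℝ)) MeasureTheory.volume 0 (2*π) := (Continuous.mul (by fun_prop) hW3c).intervalIntegrable _ _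
  have hI2 : IntervalIntegrable (fun θ : ℝ => Real.cos (((2:ℤ):ℝ) * θ) * (1 - 2 * α * Real.cos θ + α ^ 2) ^ (-(3 / 2) : ℝ)) MeasureTheory.volume 0 (2*π) := (Continuous.mul (by fun_prop) hW3c).intervalIntegrable _ _
  have hin : (∫ θ in (0:ℝ)..(2 * π), ((3 / 4 * α * (Real.cos (((1:ℤ):ℝ) * θ) * (1 - 2 * α * Real.cos θ + α ^ 2) ^ (-(1 / 2) : ℝ)) + 3 / 2 * α * (Real.cos (((0:ℤ):ℝ) * θ) * (1 - 2 * α * Real.cos θ + α ^ 2) ^ (-(3 / 2) : ℝ))) -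
      (α ^ 2 * (Real.cos (((1:ℤ):ℝ) * θ) * (1 - 2 * α * Real.cos θ + α ^ 2) ^ (-(3 / 2) : ℝ)) + 1 / 2 * α * (Real.cos (((2:ℤ):ℝ) * θ) * (1 - 2 * α * Real.cos θ + α ^ 2) ^ (-(3 / 2) : ℝ)))))
      = (3 / 4 * α * (∫ θ in (0:ℝ)..(2 * π), Real.cos (((1:ℤ):ℝ) * θ) * (1 - 2 * α * Real.cos θ + α ^ 2) ^ (-(1 / 2) : ℝ)) + 3 / 2 * α * (∫ θ in (0:ℝ)..(2 * π), Real.cos (((0:ℤ):ℝ) * θ) * (1 - 2 * α * Real.cos θ + α ^ 2) ^ (-(3 / 2) : ℝ))) - (α ^ 2 * (∫ θ in (0:ℝ)..(2 * π), Real.cos (((1:ℤ):ℝ) * θ) * (1 - 2 * α * Real.cos θ + α ^ 2) ^ (-(3 / 2) : ℝ)) + 1 / 2 * α * (∫ θ in (0:ℝ)..(2 * π), Real.cos (((2:ℤ):ℝ) * θ) * (1 - 2 * α * Real.cos θ + α ^ 2) ^ (-(3 / 2) : ℝ))) := by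
    rw [intervalIntegral.integral_sub ((hI1p.const_mul _).add (hI0.const_mul _)) ((hI1.const_mul _).add (hI2.const_mul _)),
      intervalIntegral.integral_add (hI1p.const_mul _) (hI0.const_mul _),
      intervalIntegral.integral_add (hI1.const_mul _) (hI2.const_mul _),
      intervalIntegral.integral_const_mul, intervalIntegral.integral_const_mul, intervalIntegral.integral_const_mul, intervalIntegral.integral_const_mul]
  have hbbar : Bbar α = 1/π * ∫ θ in (0:ℝ)..(2*π), ((2 * α) + (3/4 * α + -1 * α ^ 2 + 3/4 * α ^ 3) * Real.cos θ + (-1 * α + -3/2 * α ^ 2) * Real.cos θ ^ 2) * (1 - 2 * α * Real.cos θ + α ^ 2) ^ (-(3 / 2) : ℝ) := by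
    unfold Bbar laplaceCoeff
    rw [show ∀ X Y Z V : ℝ, 3 / 4 * α * (1 / π * X) + 3 / 2 * α * (1 / π * Y) - α ^ 2 * (1 / π * Z) - 1 / 2 * α * (1 / π * V)
        = 1 / π * ((3 / 4 * α * X + 3 / 2 * α * Y) - (α ^ 2 * Z + 1 / 2 * α * V)) from fun X Y Z V => by ring]
    congr 1
    rw [← hin]
    apply intervalIntegral.integral_congr
    intro θ _
    push_cast
    rw [zero_mul, Real.cos_zero, hsp θ, Real.cos_two_mul]
    ring
  rw [hbbar]
  exact mul_pos (by positivity) hFpos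

/-- At the semi major axis ratio `α = 2^{−2/3} = 1/∛4` of a 2:1 mean-motion
resonant pair, both `Ā(α) > 0` and `B̄(α) > 0`. -/
theorem Abar_Bbar_pos_at_resonant_ratio :
    0 < Abar ((2 : ℝ) ^ (-(2 : ℝ) / 3)) ∧ 0 < Bbar ((2 : ℝ) ^ (-(2 : ℝ) / 3)) := by
  have hpos : (0:ℝ) < (2 : ℝ) ^ (-(2 : ℝ) / 3) := Real.rpow_pos_of_pos (by norm_num) _
  have h3 : ((2 : ℝ) ^ (-(2 : ℝ) / 3)) ^ 3 = 1/4 := by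
    rw [← Real.rpow_natCast ((2 : ℝ) ^ (-(2 : ℝ) / 3)) 3, ← Real.rpow_mul (by norm_num : (0:ℝ) ≤ 2)]
    rw [show (-(2 : ℝ) / 3) * ((3:ℕ):ℝ) = ((-2 : ℤ):ℝ) by push_cast; ring, Real.rpow_intCast]
    norm_num
  exact ⟨abar_pos _ hpos h3, bbar_pos _ hpos h3⟩
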